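/- arXiv:1610.02432 — 6 statements merged into one kernel-verified Lean document; each statement's English description precedes it below -/
import Mathlib

section
/- Let A ∈ ℝ^{n×n}, B ∈ ℝ^{n×m}, C ∈ ℝ^{p×n}, and assume the rational matrix function S(s) = C(sI − A)⁻¹B has all of its poles in the open left half complex plane (i.e., S extends to a matrix-valued function analytic on the closed right half-plane {s : Re s ≥ 0}). If there exists a symmetric matrix X ∈ ℝ^{p×p} such that CA = XC, then sup_{ω∈ℝ} σ_max(S(iω)) = σ_max(S(0)), where σ_max denotes the largest singular value. -/
open Matrix Filter Topology Function
open scoped Kronecker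

noncomputable section

/-- Complexification of a real matrix. -/
def cplx {α β : Type*} (M : Matrix α β ℝ) : Matrix α β ℂ := M.map Complex.ofReal

/-- Transfer function `S(s) = C (sI - A)⁻¹ B` of the system `ẋ = Ax + Bu, y = Cx`. -/
def transfer {n m p : ℕ} (A : Matrix (Fin n) (Fin n) ℝ) (B : Matrix (Fin n) (Fin m) ℝ)
    (C : Matrix (Fin p) (Fin n) ℝ) (s : ℂ) : Matrix (Fin p) (Fin m) ℂ :=
  cplx C * (s • (1 : Matrix (Fin n) (Fin n) ℂ) - cplx A)⁻¹ * cplx B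

/-- Squared H₂-norm: `(1/2π) ∫ tr(S(-iω)ᵀ S(iω)) dω`. -/
def H2normSq {α β : Type*} [Fintype α] [Fintype β] (S : ℂ → Matrix α β ℂ) : ℝ :=
  (1 / (2 * Real.pi)) *
    ∫ ω : ℝ, ((S (-((ω : ℂ) * Complex.I)))ᵀ * S ((ω : ℂ) * Complex.I)).trace.re

/-- Largest singular value of a complex matrix (its ℓ²-operator norm). -/
def sigmaMax {α β : Type*} [Fintype α] [Fintype β] [DecidableEq β] (M : Matrix α β ℂ) : ℝ :=
  ‖LinearMap.toContinuousLinearMap (Matrix.toEuclideanLin M)‖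

/-- Smallest singular value of a complex matrix: `√(λ_min(Mᴴ M))`. -/
def sigmaMinC {α β : Type*} [Fintype α] [Fintype β] [DecidableEq β] (M : Matrix α β ℂ) : ℝ :=
  Real.sqrt (sInf (spectrum ℝ (Mᴴ * M)))

/-- H∞-norm: `sup_{ω ∈ ℝ} σ_max(S(iω))`. -/
def HinfNorm {α β : Type*} [Fintype α] [Fintype β] [DecidableEq β] (S : ℂ → Matrix α β ℂ) : ℝ :=
  ⨆ ω : ℝ, sigmaMax (S ((ω : ℂ) * Complex.I))

/-- Generalized unstable subspace `X₊(A)`: direct sum of the generalized eigenspaces of (the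
complexification of) `A` corresponding to eigenvalues with nonnegative real part. -/
def unstableSubspace {n : ℕ} (A : Matrix (Fin n) (Fin n) ℝ) : Submodule ℂ (Fin n → ℂ) :=
  ⨆ μ ∈ {μ : ℂ | 0 ≤ μ.re}, Module.End.maxGenEigenspace (Matrix.toLin' (cplx A)) μ

/-- A complex square matrix is Hurwitz if all its eigenvalues have negative real part. -/
def IsHurwitz {n : ℕ} (M : Matrix (Fin n) (Fin n) ℂ) : Prop :=
  ∀ μ ∈ spectrum ℂ M, μ.re < 0

/-- Transfer function `S_λ(s) = λ (sI - A + λB)⁻¹ E` of the auxiliary system. -/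
def auxS {n r : ℕ} (A B : Matrix (Fin n) (Fin n) ℝ) (E : Matrix (Fin n) (Fin r) ℝ)
    (lam : ℝ) (s : ℂ) : Matrix (Fin n) (Fin r) ℂ :=
  (lam : ℂ) • ((s • (1 : Matrix (Fin n) (Fin n) ℂ) - cplx A + (lam : ℂ) • cplx B)⁻¹ * cplx E)

/-- Transfer function `S(s) = (L⊗Iₙ)(sI - I_N⊗A + L⊗B)⁻¹(M⊗E)` of the original network. -/
def netS {N n r m : ℕ} (L : Matrix (Fin N) (Fin N) ℝ) (A B : Matrix (Fin n) (Fin n) ℝ)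
    (E : Matrix (Fin n) (Fin r) ℝ) (M : Matrix (Fin N) (Fin m) ℝ) (s : ℂ) :
    Matrix (Fin N × Fin n) (Fin m × Fin r) ℂ :=
  cplx (L ⊗ₖ (1 : Matrix (Fin n) (Fin n) ℝ)) *
    (s • (1 : Matrix (Fin N × Fin n) (Fin N × Fin n) ℂ) -
      cplx ((1 : Matrix (Fin N) (Fin N) ℝ) ⊗ₖ A - L ⊗ₖ B))⁻¹ *
    cplx (M ⊗ₖ E)

/-- Transfer function `Ŝ(s) = (LP⊗Iₙ)(sI - I_k⊗A + L̂⊗B)⁻¹(M̂⊗E)` of the reduced network. -/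
def netShat {N n r m k : ℕ} (L : Matrix (Fin N) (Fin N) ℝ) (P : Matrix (Fin N) (Fin k) ℝ)
    (Lhat : Matrix (Fin k) (Fin k) ℝ) (Mhat : Matrix (Fin k) (Fin m) ℝ)
    (A B : Matrix (Fin n) (Fin n) ℝ) (E : Matrix (Fin n) (Fin r) ℝ) (s : ℂ) :
    Matrix (Fin N × Fin n) (Fin m × Fin r) ℂ :=
  cplx ((L * P) ⊗ₖ (1 : Matrix (Fin n) (Fin n) ℝ)) *
    (s • (1 : Matrix (Fin k × Fin n) (Fin k × Fin n) ℂ) -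
      cplx ((1 : Matrix (Fin k) (Fin k) ℝ) ⊗ₖ A - Lhat ⊗ₖ B))⁻¹ *
    cplx (Mhat ⊗ₖ E)

/-- Transfer function `S(s) = L (sI + L)⁻¹ M` of the single-integrator network. -/
def singleS {N m : ℕ} (L : Matrix (Fin N) (Fin N) ℝ) (M : Matrix (Fin N) (Fin m) ℝ)
    (s : ℂ) : Matrix (Fin N) (Fin m) ℂ :=
  cplx L * (s • (1 : Matrix (Fin N) (Fin N) ℂ) + cplx L)⁻¹ * cplx M

/-- Transfer function `Ŝ(s) = LP (sI + L̂)⁻¹ M̂` of the reduced single-integrator network. -/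
def singleShat {N m k : ℕ} (L : Matrix (Fin N) (Fin N) ℝ) (P : Matrix (Fin N) (Fin k) ℝ)
    (Lhat : Matrix (Fin k) (Fin k) ℝ) (Mhat : Matrix (Fin k) (Fin m) ℝ) (s : ℂ) :
    Matrix (Fin N) (Fin m) ℂ :=
  cplx (L * P) * (s • (1 : Matrix (Fin k) (Fin k) ℂ) + cplx Lhat)⁻¹ * cplx Mhat

/-- Squared Frobenius norm `‖M‖_F² = tr(MᵀM)`. -/
def frobSq {α β : Type*} [Fintype α] [Fintype β] (M : Matrix α β ℝ) : ℝ := (Mᵀ * M).trace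

end

section auxlemmas

lemma cplx_mul' {α β γ : Type*} [Fintype β] (M : Matrix α β ℝ) (N : Matrix β γ ℝ) :
    cplx (M * N) = cplx M * cplx N := by
  ext i j
  simp [cplx, Matrix.mul_apply, Matrix.map_apply]

lemma vecMul_smul_mat {α m o : Type*} [Fintype m] [CommRing α] (v : m → α) (a : α)
    (M : Matrix m o α) : v ᵥ* (a • M) = a • (v ᵥ* M) := by
  ext j
  simp only [Matrix.vecMul, dotProduct, Matrix.smul_apply, Pi.smul_apply, smul_eq_mul,
    Finset.mul_sum]
  exact Finset.sum_congr rfl fun i _ => by ring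

lemma eq_of_continuousAt_of_eqOn' {f : ℂ → ℂ} {G : Set ℂ} {s c : ℂ}
    (hne : Filter.NeBot (nhdsWithin s G)) (hf : ContinuousAt f s)
    (heq : ∀ z ∈ G, f z = c) : f s = c := by
  haveI := hne
  have h1 : Filter.Tendsto f (nhdsWithin s G) (nhds (f s)) := hf.continuousWithinAt.tendsto
  have h2 : Filter.Tendsto f (nhdsWithin s G) (nhds c) :=
    (tendsto_const_nhds (α := ℂ)).congr'
      (Filter.eventually_of_mem self_mem_nhdsWithin fun z hz => (heq z hz).symm)
  exact tendsto_nhds_unique h1 h2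

lemma neBot_goodset' {n : ℕ} (A : Matrix (Fin n) (Fin n) ℝ) (lam : ℝ) (s : ℂ) :
    Filter.NeBot (nhdsWithin s
      {z : ℂ | IsUnit (z • (1 : Matrix (Fin n) (Fin n) ℂ) - cplx A) ∧ z ≠ (lam : ℂ)}) := by
  rw [← mem_closure_iff_nhdsWithin_neBot]
  have hbad : ({z : ℂ | ¬ IsUnit (z • (1 : Matrix (Fin n) (Fin n) ℂ) - cplx A)}
      ∪ {(lam : ℂ)}).Countable := by
    refine Set.Countable.union ?_ (Set.countable_singleton _)
    have hspec : {z : ℂ | ¬ IsUnit (z • (1 : Matrix (Fin n) (Fin n) ℂ) - cplx A)}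
        = spectrum ℂ (cplx A) := by
      ext z
      simp [spectrum.mem_iff, Algebra.algebraMap_eq_smul_one]
    rw [hspec]
    exact (Matrix.finite_spectrum _).countable
  have hd := hbad.dense_compl ℂ
  have hset : {z : ℂ | IsUnit (z • (1 : Matrix (Fin n) (Fin n) ℂ) - cplx A) ∧ z ≠ (lam : ℂ)}
      = ({z : ℂ | ¬ IsUnit (z • (1 : Matrix (Fin n) (Fin n) ℂ) - cplx A)} ∪ {(lam : ℂ)})ᶜ := by
    ext z
    simp [not_or, and_comm]
  rw [hset]
  exact hd s

lemma key_vecMul_transfer {n m p : ℕ} {A : Matrix (Fin n) (Fin n) ℝ}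
    {B : Matrix (Fin n) (Fin m) ℝ} {C : Matrix (Fin p) (Fin n) ℝ}
    {X : Matrix (Fin p) (Fin p) ℝ} (hXC : C * A = X * C) (w : Fin p → ℂ) (lam : ℝ)
    (hw : w ᵥ* cplx X = (lam : ℂ) • w) (z : ℂ)
    (hz : IsUnit (z • (1 : Matrix (Fin n) (Fin n) ℂ) - cplx A)) (hz2 : z ≠ (lam : ℂ)) :
    w ᵥ* transfer A B C z = (z - (lam : ℂ))⁻¹ • (w ᵥ* cplx (C * B)) := by
  set D := z • (1 : Matrix (Fin n) (Fin n) ℂ) - cplx A with hD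
  have hdet : IsUnit D.det := (Matrix.isUnit_iff_isUnit_det D).mp hz
  have hDD : D * D⁻¹ = 1 := Matrix.mul_nonsing_inv D hdet
  have hCA : cplx C * cplx A = cplx X * cplx C := by
    rw [← cplx_mul', ← cplx_mul', hXC]
  have hstep : w ᵥ* (cplx C * D) = (z - (lam : ℂ)) • (w ᵥ* cplx C) := by
    rw [← Matrix.vecMul_vecMul, hD, Matrix.vecMul_sub, vecMul_smul_mat, Matrix.vecMul_one,
      Matrix.vecMul_vecMul, hCA, ← Matrix.vecMul_vecMul, hw, Matrix.smul_vecMul, sub_smul]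
  have h2 : (z - (lam : ℂ)) • ((w ᵥ* cplx C) ᵥ* D⁻¹) = w ᵥ* cplx C := by
    have e1 : ((z - (lam : ℂ)) • (w ᵥ* cplx C)) ᵥ* D⁻¹
        = (z - (lam : ℂ)) • ((w ᵥ* cplx C) ᵥ* D⁻¹) := Matrix.smul_vecMul _ _ _
    rw [← e1, ← hstep, Matrix.vecMul_vecMul, Matrix.mul_assoc, hDD, Matrix.mul_one]
  have hzlam : z - (lam : ℂ) ≠ 0 := sub_ne_zero.mpr hz2
  have h3 : (w ᵥ* cplx C) ᵥ* D⁻¹ = (z - (lam : ℂ))⁻¹ • (w ᵥ* cplx C) := by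
    have h4 := congrArg (fun u => (z - (lam : ℂ))⁻¹ • u) h2
    simpa [smul_smul, inv_mul_cancel₀ hzlam] using h4
  have e2 : w ᵥ* (cplx C * D⁻¹ * cplx B) = ((w ᵥ* cplx C) ᵥ* D⁻¹) ᵥ* cplx B := by
    rw [Matrix.vecMul_vecMul, Matrix.vecMul_vecMul, Matrix.mul_assoc]
  rw [transfer, ← hD, e2, h3, Matrix.smul_vecMul, Matrix.vecMul_vecMul, ← cplx_mul']

end auxlemmas


/-- if `S(s) = C(sI − A)⁻¹B` has all its poles in the open left half-plane
(i.e. it extends to a function `T` analytic on the closed right half-plane) and there is a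
symmetric `X` with `CA = XC`, then `sup_ω σ_max(S(iω)) = σ_max(S(0))`. -/
theorem stmt2 {n m p : ℕ} (A : Matrix (Fin n) (Fin n) ℝ) (B : Matrix (Fin n) (Fin m) ℝ)
    (C : Matrix (Fin p) (Fin n) ℝ)
    (T : ℂ → Matrix (Fin p) (Fin m) ℂ)
    (hTanalytic : ∀ s : ℂ, 0 ≤ s.re → ∀ i j, AnalyticAt ℂ (fun z => T z i j) s)
    (hTeq : ∀ s : ℂ, IsUnit (s • (1 : Matrix (Fin n) (Fin n) ℂ) - cplx A) →
      T s = transfer A B C s)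
    (X : Matrix (Fin p) (Fin p) ℝ) (hXsymm : X.IsSymm) (hXC : C * A = X * C) :
    (⨆ ω : ℝ, sigmaMax (T ((ω : ℂ) * Complex.I))) = sigmaMax (T 0) := by
  classical
  have hH : (cplx X).IsHermitian := by
    ext i j
    simp only [cplx, Matrix.conjTranspose_apply, Matrix.map_apply, RCLike.star_def,
      Complex.conj_ofReal]
    exact congrArg _ (congrFun (congrFun hXsymm i) j)
  set b := hH.eigenvectorBasis with hb
  set lam : Fin p → ℝ := hH.eigenvalues with hlamdef
  set w : Fin p → Fin p → ℂ := fun k => star (⇑(b k)) with hwdef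
  set c : Fin p → Fin m → ℂ := fun k => w k ᵥ* cplx (C * B) with hcdef
  -- eigen property
  have hweig : ∀ k, w k ᵥ* cplx X = ((lam k : ℝ) : ℂ) • w k := by
    intro k
    have h1 := hH.mulVec_eigenvectorBasis k
    have h2 : w k ᵥ* cplx X = star (cplx X *ᵥ ⇑(b k)) := by
      rw [Matrix.star_mulVec, hH.eq]
    rw [h2, h1]
    ext i
    simp [hwdef, Complex.real_smul]
    rfl
  -- algebra on the good set
  have halg : ∀ (k) (z : ℂ), IsUnit (z • (1 : Matrix (Fin n) (Fin n) ℂ) - cplx A) →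
      z ≠ ((lam k : ℝ) : ℂ) →
      w k ᵥ* T z = (z - (lam k : ℂ))⁻¹ • c k := by
    intro k z hz hz2
    rw [hTeq z hz, hcdef]
    exact key_vecMul_transfer hXC (w k) (lam k) (hweig k) z hz hz2
  -- continuity of components
  have hcont : ∀ (k : Fin p) (j : Fin m) (s : ℂ), 0 ≤ s.re →
      ContinuousAt (fun z => (w k ᵥ* T z) j) s := by
    intro k j s hs
    have heq2 : (fun z => (w k ᵥ* T z) j) = fun z => ∑ i, w k i * T z i j := by
      funext z; simp [Matrix.vecMul, dotProduct]
    rw [heq2]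
    exact tendsto_finset_sum _ fun i _ => continuousAt_const.mul (hTanalytic s hs i j).continuousAt
  -- c vanishes for nonnegative eigenvalues
  have hczero : ∀ k, 0 ≤ lam k → c k = 0 := by
    intro k hk
    funext j
    have hne := neBot_goodset' A (lam k) ((lam k : ℝ) : ℂ)
    have hre : (0:ℝ) ≤ (((lam k : ℝ) : ℂ)).re := by simpa using hk
    have hf : ContinuousAt (fun z => (z - ((lam k : ℝ) : ℂ)) * ((w k ᵥ* T z) j))
        ((lam k : ℝ) : ℂ) :=
      (continuousAt_id.sub continuousAt_const).mul (hcont k j _ hre)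
    have heqG : ∀ z ∈ {z : ℂ | IsUnit (z • (1 : Matrix (Fin n) (Fin n) ℂ) - cplx A)
        ∧ z ≠ ((lam k : ℝ) : ℂ)},
        (z - ((lam k : ℝ) : ℂ)) * ((w k ᵥ* T z) j) = c k j := by
      intro z hz
      rw [halg k z hz.1 hz.2]
      simp only [Pi.smul_apply, smul_eq_mul]
      rw [← mul_assoc, mul_inv_cancel₀ (sub_ne_zero.mpr hz.2), one_mul]
    have := eq_of_continuousAt_of_eqOn' hne hf heqG
    simp only [sub_self, zero_mul] at this
    exact (this.symm.trans rfl) ▸ this.symm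
  -- master formula on the closed right half plane
  have hmaster : ∀ (k) (s : ℂ), 0 ≤ s.re → w k ᵥ* T s = (s - (lam k : ℂ))⁻¹ • c k := by
    intro k s hs
    funext j
    by_cases hk : 0 ≤ lam k
    · have hc := hczero k hk
      have hne := neBot_goodset' A (lam k) s
      have hf : ContinuousAt (fun z => (w k ᵥ* T z) j) s := hcont k j s hs
      have heqG : ∀ z ∈ {z : ℂ | IsUnit (z • (1 : Matrix (Fin n) (Fin n) ℂ) - cplx A)
          ∧ z ≠ ((lam k : ℝ) : ℂ)}, (w k ᵥ* T z) j = 0 := by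
        intro z hz
        rw [halg k z hz.1 hz.2, hc]
        simp
      have h0 := eq_of_continuousAt_of_eqOn' hne hf heqG
      rw [h0, hc]
      simp
    · push_neg at hk
      have hsne : s ≠ ((lam k : ℝ) : ℂ) := by
        intro h
        rw [h] at hs
        simp only [Complex.ofReal_re] at hs
        linarith
      have hne := neBot_goodset' A (lam k) s
      have hf : ContinuousAt
          (fun z => (w k ᵥ* T z) j - (z - ((lam k : ℝ) : ℂ))⁻¹ * c k j) s :=
        (hcont k j s hs).sub
          (((continuousAt_id.sub continuousAt_const).inv₀ (sub_ne_zero.mpr hsne)).mul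
            continuousAt_const)
      have heqG : ∀ z ∈ {z : ℂ | IsUnit (z • (1 : Matrix (Fin n) (Fin n) ℂ) - cplx A)
          ∧ z ≠ ((lam k : ℝ) : ℂ)},
          (w k ᵥ* T z) j - (z - ((lam k : ℝ) : ℂ))⁻¹ * c k j = 0 := by
        intro z hz
        rw [halg k z hz.1 hz.2]
        simp only [Pi.smul_apply, smul_eq_mul]
        ring
      have h0 := eq_of_continuousAt_of_eqOn' hne hf heqG
      have := sub_eq_zero.mp h0
      simpa using this
  -- repr formula
  have hrepr : ∀ (M : Matrix (Fin p) (Fin m) ℂ) (x : EuclideanSpace ℂ (Fin m)) (k),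
      b.repr (Matrix.toEuclideanLin M x) k
        = (w k ᵥ* M) ⬝ᵥ (WithLp.equiv 2 (Fin m → ℂ) x) := by
    intro M x k
    rw [OrthonormalBasis.repr_apply_apply, EuclideanSpace.inner_eq_star_dotProduct,
      Matrix.ofLp_toEuclideanLin_apply, dotProduct_comm, Matrix.dotProduct_mulVec]
    rfl
  -- pointwise bound
  have hbound : ∀ ω : ℝ, sigmaMax (T ((ω : ℂ) * Complex.I)) ≤ sigmaMax (T 0) := by
    intro ω
    have hs₁ : (0:ℝ) ≤ ((ω : ℂ) * Complex.I).re := by simp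
    have hs₀ : (0:ℝ) ≤ (0 : ℂ).re := by simp
    have hcomp : ∀ (x : EuclideanSpace ℂ (Fin m)) (k),
        ‖b.repr (Matrix.toEuclideanLin (T ((ω : ℂ) * Complex.I)) x) k‖
          ≤ ‖b.repr (Matrix.toEuclideanLin (T 0) x) k‖ := by
      intro x k
      rw [hrepr, hrepr, hmaster k _ hs₁, hmaster k _ hs₀]
      by_cases hk : 0 ≤ lam k
      · rw [hczero k hk]
        simp
      · push_neg at hk
        rw [smul_dotProduct, smul_dotProduct, smul_eq_mul, smul_eq_mul,
          norm_mul, norm_mul]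
        apply mul_le_mul_of_nonneg_right _ (norm_nonneg _)
        rw [norm_inv, norm_inv]
        have h0 : (0:ℝ) < ‖(0 : ℂ) - ((lam k : ℝ) : ℂ)‖ := by
          rw [norm_pos_iff]
          intro h
          rw [sub_eq_zero] at h
          exact absurd (Complex.ofReal_eq_zero.mp (by exact_mod_cast h.symm)) (by linarith)
        refine inv_anti₀ h0 ?_
        have h1 : ‖(0 : ℂ) - ((lam k : ℝ) : ℂ)‖ = Real.sqrt (lam k ^ 2) := by
          rw [zero_sub, norm_neg, Complex.norm_real, Real.norm_eq_abs, Real.sqrt_sq_eq_abs]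
        have h2 : ‖(ω : ℂ) * Complex.I - ((lam k : ℝ) : ℂ)‖
            = Real.sqrt (ω ^ 2 + lam k ^ 2) := by
          rw [Complex.norm_def, Complex.normSq_apply]
          congr 1
          simp
          ring
        rw [h1, h2]
        exact Real.sqrt_le_sqrt (by nlinarith [sq_nonneg ω])
    have hnorm : ∀ x : EuclideanSpace ℂ (Fin m),
        ‖Matrix.toEuclideanLin (T ((ω : ℂ) * Complex.I)) x‖
          ≤ ‖Matrix.toEuclideanLin (T 0) x‖ := by
      intro x
      rw [← b.repr.norm_map (Matrix.toEuclideanLin (T ((ω : ℂ) * Complex.I)) x),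
        ← b.repr.norm_map (Matrix.toEuclideanLin (T 0) x),
        EuclideanSpace.norm_eq, EuclideanSpace.norm_eq]
      refine Real.sqrt_le_sqrt (Finset.sum_le_sum fun k _ => ?_)
      exact pow_le_pow_left₀ (norm_nonneg _) (hcomp x k) 2
    rw [sigmaMax, sigmaMax]
    refine ContinuousLinearMap.opNorm_le_bound _ (norm_nonneg _) fun x => ?_
    calc ‖(LinearMap.toContinuousLinearMap
            (Matrix.toEuclideanLin (T ((ω : ℂ) * Complex.I)))) x‖
        = ‖Matrix.toEuclideanLin (T ((ω : ℂ) * Complex.I)) x‖ := rfl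
      _ ≤ ‖Matrix.toEuclideanLin (T 0) x‖ := hnorm x
      _ = ‖(LinearMap.toContinuousLinearMap (Matrix.toEuclideanLin (T 0))) x‖ := rfl
      _ ≤ ‖LinearMap.toContinuousLinearMap (Matrix.toEuclideanLin (T 0))‖ * ‖x‖ :=
          ContinuousLinearMap.le_opNorm _ x
  -- conclusion
  have h00 : sigmaMax (T (((0:ℝ) : ℂ) * Complex.I)) = sigmaMax (T 0) := by norm_num
  refine le_antisymm (ciSup_le hbound) ?_
  have hbdd : BddAbove (Set.range fun ω : ℝ => sigmaMax (T ((ω : ℂ) * Complex.I))) := by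
    refine ⟨sigmaMax (T 0), fun y hy => ?_⟩
    obtain ⟨ω, rfl⟩ := hy
    exact hbound ω
  calc sigmaMax (T 0) = sigmaMax (T (((0:ℝ) : ℂ) * Complex.I)) := h00.symm
    _ ≤ ⨆ ω : ℝ, sigmaMax (T ((ω : ℂ) * Complex.I)) := le_ciSup hbdd 0
end

section
/- Let G be a weighted undirected graph on node set {1,…,N} with symmetric adjacency matrix A = (a_{ij}), a_{ij} ≥ 0, a_{ii} = 0, and Laplacian L defined by L_{ii} = Σ_j a_{ij} and L_{ij} = −a_{ij} for i ≠ j. Let π = {C₁,…,C_k} be a partition of {1,…,N} with characteristic matrix P ∈ ℝ^{N×k}, where P_{ij} = 1 if i ∈ C_j and 0 otherwise. Then π is an almost equitable partition of G — i.e., for every pair p ≠ q, the degree d_{pq}(j) = Σ_{i∈C_p} a_{ij} is the same for all j ∈ C_q — if and only if the column space Im P is invariant under L, i.e., L(Im P) ⊆ Im P. -/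
open Matrix Filter Topology Function
open scoped Kronecker

/-- a partition is almost equitable iff `Im P` is invariant under the
Laplacian `L`. -/
theorem stmt4 {N k : ℕ} (a : Fin N → Fin N → ℝ)
    (hsym : ∀ i j, a i j = a j i) (hnonneg : ∀ i j, 0 ≤ a i j) (hdiag : ∀ i, a i i = 0)
    (L : Matrix (Fin N) (Fin N) ℝ)
    (hL : ∀ i j, L i j = if i = j then ∑ l, a i l else -(a i j))
    (c : Fin N → Fin k) (hc : Function.Surjective c)
    (P : Matrix (Fin N) (Fin k) ℝ)
    (hP : P = Matrix.of fun i j => if c i = j then 1 else 0) :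
    (∀ p q : Fin k, p ≠ q → ∀ j₁ j₂ : Fin N, c j₁ = q → c j₂ = q →
        (∑ i ∈ Finset.univ.filter fun i => c i = p, a i j₁) =
        (∑ i ∈ Finset.univ.filter fun i => c i = p, a i j₂)) ↔
      Submodule.map L.mulVecLin (LinearMap.range P.mulVecLin) ≤
        LinearMap.range P.mulVecLin := by
  classical
  have hPv : ∀ y : Fin k → ℝ, P.mulVec y = fun i => y (c i) := by
    intro y; funext i
    simp [hP, Matrix.mulVec, dotProduct]
  have hrange : ∀ x : Fin N → ℝ,
      x ∈ LinearMap.range P.mulVecLin ↔ ∀ i i', c i = c i' → x i = x i' := by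
    intro x
    constructor
    · rintro ⟨y, rfl⟩ i i' h
      simp [Matrix.mulVecLin_apply, hPv, h]
    · intro h
      refine ⟨fun q => x (hc q).choose, ?_⟩
      simp only [Matrix.mulVecLin_apply, hPv]
      funext i
      exact h _ _ ((hc (c i)).choose_spec)
  have hLv : ∀ (x : Fin N → ℝ) (j : Fin N),
      L.mulVec x j = ∑ i, a j i * (x j - x i) := by
    intro x j
    have e1 : ∀ i, L j i * x i =
        (if j = i then ((∑ l, a j l) + a j i) * x i else 0) - a j i * x i := by
      intro i
      by_cases h : j = i
      · subst h; simp [hL, hdiag]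
      · simp [hL, h]
    calc L.mulVec x j = ∑ i, L j i * x i := rfl
      _ = ∑ i, ((if j = i then ((∑ l, a j l) + a j i) * x i else 0) - a j i * x i) :=
          Finset.sum_congr rfl fun i _ => e1 i
      _ = (∑ i, if j = i then ((∑ l, a j l) + a j i) * x i else 0) - ∑ i, a j i * x i := by
          rw [Finset.sum_sub_distrib]
      _ = ((∑ l, a j l) + a j j) * x j - ∑ i, a j i * x i := by
          rw [Finset.sum_ite_eq]; simp
      _ = ∑ i, a j i * (x j - x i) := by
          simp [mul_sub, Finset.sum_sub_distrib, ← Finset.sum_mul, hdiag]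
  constructor
  · intro hAEP
    rintro x ⟨y, hy, rfl⟩
    have hy' := (hrange y).1 hy
    refine (hrange _).2 ?_
    intro j₁ j₂ hj
    simp only [Matrix.mulVecLin_apply]
    rw [hLv, hLv]
    rw [← Finset.sum_fiberwise Finset.univ c (fun i => a j₁ i * (y j₁ - y i)),
        ← Finset.sum_fiberwise Finset.univ c (fun i => a j₂ i * (y j₂ - y i))]
    refine Finset.sum_congr rfl fun p _ => ?_
    by_cases hp : p = c j₁
    · subst hp
      rw [Finset.sum_eq_zero, Finset.sum_eq_zero]
      · intro i hi
        rw [hy' j₂ i (hj.symm.trans (Finset.mem_filter.1 hi).2.symm)]; ring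
      · intro i hi
        rw [hy' j₁ i (Finset.mem_filter.1 hi).2.symm]; ring
    · set i₀ := (hc p).choose with hi₀
      have hci₀ : c i₀ = p := (hc p).choose_spec
      have key : ∀ j : Fin N, c j = c j₁ →
          ∑ i ∈ Finset.univ.filter fun i => c i = p, a j i * (y j - y i) =
          (∑ i ∈ Finset.univ.filter fun i => c i = p, a i j) * (y j - y i₀) := by
        intro j hjq
        rw [Finset.sum_mul]
        refine Finset.sum_congr rfl fun i hi => ?_
        rw [hy' i i₀ ((Finset.mem_filter.1 hi).2.trans hci₀.symm), hsym j i]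
      rw [key j₁ rfl, key j₂ hj.symm]
      rw [hAEP p (c j₁) hp j₁ j₂ rfl hj.symm, hy' j₁ j₂ hj]
  · intro hInv p q hpq j₁ j₂ h1 h2
    set g : Fin k → ℝ := fun r => if r = p then 1 else 0 with hg
    have hx : (fun i => g (c i)) ∈ LinearMap.range P.mulVecLin := by
      refine (hrange _).2 fun i i' h => by rw [h]
    have hm : L.mulVec (fun i => g (c i)) ∈ LinearMap.range P.mulVecLin :=
      hInv ⟨_, hx, rfl⟩
    have hconst := (hrange _).1 hm j₁ j₂ (h1.trans h2.symm)
    rw [hLv, hLv] at hconst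
    have key : ∀ j : Fin N, c j = q →
        ∑ i, a j i * (g (c j) - g (c i)) =
        -(∑ i ∈ Finset.univ.filter fun i => c i = p, a i j) := by
      intro j hj
      have e : ∀ i, a j i * (g (c j) - g (c i)) =
          if c i = p then -(a i j) else 0 := by
        intro i
        rw [hj]
        simp only [hg]
        rw [if_neg (Ne.symm hpq)]
        by_cases h : c i = p <;> simp [h, hsym j i]
      rw [Finset.sum_congr rfl fun i _ => e i, ← Finset.sum_filter,
        ← Finset.sum_neg_distrib]
    rw [key j₁ h1, key j₂ h2] at hconst
    exact neg_injective hconst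
end

section
/- Let L ∈ ℝ^{N×N} be the Laplacian of a connected weighted undirected graph (L symmetric, positive semidefinite, L𝟙_N = 0, with 0 a simple eigenvalue), let A, B ∈ ℝ^{n×n}, E ∈ ℝ^{n×r}, and M ∈ ℝ^{N×m} have columns e_{v₁},…,e_{v_m} for distinct leader nodes v₁,…,v_m. Assume A − λB is Hurwitz for every nonzero eigenvalue λ of L. Let π be an almost equitable partition with characteristic matrix P (so L(Im P) ⊆ Im P), L̂ = (PᵀP)⁻¹PᵀLP, M̂ = (PᵀP)⁻¹PᵀM. Define S(s) = (L⊗I_n)(sI − I_N⊗A + L⊗B)⁻¹(M⊗E) and Ŝ(s) = (LP⊗I_n)(sI − I_k⊗A + L̂⊗B)⁻¹(M̂⊗E). Then ‖S − Ŝ‖²_{H₂} = ‖S‖²_{H₂} − ‖Ŝ‖²_{H₂}. -/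
open Matrix Filter Topology Function
open scoped Kronecker

noncomputable section
namespace Stmt7
open Complex MeasureTheory


lemma cplx_apply {α β : Type*} (M : Matrix α β ℝ) (i : α) (j : β) : cplx M i j = (M i j : ℂ) := rfl

lemma cplx_mul {α β γ : Type*} [Fintype β] (M : Matrix α β ℝ) (N : Matrix β γ ℝ) :
    cplx (M * N) = cplx M * cplx N := by
  ext i j; simp only [cplx_apply, Matrix.mul_apply]; push_cast; rfl

lemma cplx_one {α : Type*} [DecidableEq α] : cplx (1 : Matrix α α ℝ) = 1 := by
  ext i j; by_cases h : i = j <;> simp [cplx_apply, Matrix.one_apply, h]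

lemma cplx_sub {α β : Type*} (M N : Matrix α β ℝ) : cplx (M - N) = cplx M - cplx N := by
  ext i j; simp [cplx_apply, Matrix.sub_apply]

lemma cplx_add {α β : Type*} (M N : Matrix α β ℝ) : cplx (M + N) = cplx M + cplx N := by
  ext i j; simp [cplx_apply, Matrix.add_apply]

lemma cplx_smul {α β : Type*} (r : ℝ) (M : Matrix α β ℝ) : cplx (r • M) = (r : ℂ) • cplx M := by
  ext i j; simp [cplx_apply, Matrix.smul_apply]

lemma cplx_transpose {α β : Type*} (M : Matrix α β ℝ) : cplx Mᵀ = (cplx M)ᵀ := by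
  ext i j; rfl

lemma cplx_conjT {α β : Type*} (M : Matrix α β ℝ) : (cplx M)ᴴ = cplx Mᵀ := by
  ext i j; simp [cplx_apply, Matrix.conjTranspose_apply, Complex.conj_ofReal]

/-- squared Frobenius norm over ℂ -/
def frobC {α β : Type*} [Fintype α] [Fintype β] (M : Matrix α β ℂ) : ℝ :=
  ∑ i, ∑ j, Complex.normSq (M i j)

lemma frobC_nonneg {α β : Type*} [Fintype α] [Fintype β] (M : Matrix α β ℂ) : 0 ≤ frobC M :=
  Finset.sum_nonneg fun _ _ => Finset.sum_nonneg fun _ _ => Complex.normSq_nonneg _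

lemma trace_re_eq_frobC {α β : Type*} [Fintype α] [Fintype β] (M : Matrix α β ℂ) :
    (Mᴴ * M).trace.re = frobC M := by
  have h : ∀ z : ℂ, ((starRingEnd ℂ) z * z).re = Complex.normSq z := by
    intro z; rw [← Complex.normSq_eq_conj_mul_self]; exact Complex.ofReal_re _
  rw [Matrix.trace]
  simp only [Matrix.diag, Matrix.mul_apply, Matrix.conjTranspose_apply, RCLike.star_def]
  rw [Complex.re_sum, frobC, Finset.sum_comm]
  exact Finset.sum_congr rfl fun j _ => by rw [Complex.re_sum]; exact Finset.sum_congr rfl fun i _ => h _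

section Frob
attribute [local instance] Matrix.frobeniusSeminormedAddCommGroup

lemma frobC_eq_sq_norm {α β : Type*} [Fintype α] [Fintype β] (M : Matrix α β ℂ) :
    frobC M = ‖M‖ ^ 2 := by
  rw [Matrix.frobenius_norm_def]
  have hx : (0:ℝ) ≤ ∑ i, ∑ j, ‖M i j‖ ^ (2:ℝ) := by
    refine Finset.sum_nonneg fun _ _ => Finset.sum_nonneg fun _ _ => ?_
    positivity
  rw [← Real.rpow_natCast (_ ^ (1/2 : ℝ)) 2, ← Real.rpow_mul hx]
  norm_num
  rw [frobC]
  refine Finset.sum_congr rfl fun i _ => Finset.sum_congr rfl fun j _ => ?_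
  exact (Complex.sq_norm _).symm

lemma frobC_mul_le {α β γ : Type*} [Fintype α] [Fintype β] [Fintype γ]
    (X : Matrix α β ℂ) (Y : Matrix β γ ℂ) : frobC (X * Y) ≤ frobC X * frobC Y := by
  rw [frobC_eq_sq_norm, frobC_eq_sq_norm, frobC_eq_sq_norm, ← mul_pow]
  exact pow_le_pow_left₀ (norm_nonneg _) (Matrix.frobenius_norm_mul X Y) 2

end Frob

lemma continuous_frobC {α β : Type*} [Fintype α] [Fintype β] {F : ℝ → Matrix α β ℂ}
    (hF : Continuous F) : Continuous fun ω => frobC (F ω) := by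
  unfold frobC
  refine continuous_finset_sum _ fun i _ => continuous_finset_sum _ fun j _ => ?_
  exact Complex.continuous_normSq.comp (hF.matrix_elem i j)

lemma frobC_proj_split {α β : Type*} [Fintype α] [DecidableEq α] [Fintype β]
    (Q : Matrix α α ℂ) (X : Matrix α β ℂ) (hQ2 : Q * Q = Q) (hQh : Qᴴ = Q) :
    frobC X = frobC (Q * X) + frobC ((1 - Q) * X) := by
  have h1 : (Q * X)ᴴ * (Q * X) = Xᴴ * (Q * X) := by
    rw [Matrix.conjTranspose_mul, Matrix.mul_assoc, ← Matrix.mul_assoc Qᴴ, hQh, hQ2,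
      ← Matrix.mul_assoc]
  have hQ2' : (1 - Q) * (1 - Q) = 1 - Q := by
    have h : (1 - Q) * (1 - Q) = 1 - Q - Q + Q * Q := by noncomm_ring
    rw [h, hQ2]; abel
  have hQh' : (1 - Q)ᴴ = 1 - Q := by
    rw [Matrix.conjTranspose_sub, Matrix.conjTranspose_one, hQh]
  have h2 : ((1 - Q) * X)ᴴ * ((1 - Q) * X) = Xᴴ * ((1 - Q) * X) := by
    rw [Matrix.conjTranspose_mul, Matrix.mul_assoc, ← Matrix.mul_assoc ((1-Q)ᴴ), hQh', hQ2',
      ← Matrix.mul_assoc]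
  rw [← trace_re_eq_frobC, ← trace_re_eq_frobC, ← trace_re_eq_frobC, h1, h2]
  have : Xᴴ * X = Xᴴ * (Q * X) + Xᴴ * ((1 - Q) * X) := by
    rw [← Matrix.mul_add]
    congr 1
    rw [← Matrix.add_mul]
    simp
  rw [this, Matrix.trace_add, Complex.add_re]

lemma frobC_proj_le {α β : Type*} [Fintype α] [DecidableEq α] [Fintype β]
    (Q : Matrix α α ℂ) (X : Matrix α β ℂ) (hQ2 : Q * Q = Q) (hQh : Qᴴ = Q) :
    frobC (Q * X) ≤ frobC X := by
  rw [frobC_proj_split Q X hQ2 hQh]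
  have := frobC_nonneg ((1 - Q) * X)
  linarith

lemma frobC_unit_mul {α β : Type*} [Fintype α] [DecidableEq α] [Fintype β] (W : Matrix α α ℂ) (X : Matrix α β ℂ)
    (hW : Wᴴ * W = 1) : frobC (W * X) = frobC X := by
  rw [← trace_re_eq_frobC, ← trace_re_eq_frobC]
  congr 2
  rw [Matrix.conjTranspose_mul, Matrix.mul_assoc, ← Matrix.mul_assoc Wᴴ, hW, Matrix.one_mul]

/-- entrywise complex conjugate -/
def conjM {α β : Type*} (X : Matrix α β ℂ) : Matrix α β ℂ := X.map (starRingEnd ℂ)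

lemma conjM_apply {α β : Type*} (X : Matrix α β ℂ) (i : α) (j : β) :
    conjM X i j = (starRingEnd ℂ) (X i j) := rfl

lemma conjM_mul {α β γ : Type*} [Fintype β] (X : Matrix α β ℂ) (Y : Matrix β γ ℂ) :
    conjM (X * Y) = conjM X * conjM Y := by
  ext i j; simp [conjM_apply, Matrix.mul_apply, map_sum]

lemma conjM_cplx {α β : Type*} (M : Matrix α β ℝ) : conjM (cplx M) = cplx M := by
  ext i j; simp [conjM_apply, cplx_apply, Complex.conj_ofReal]

lemma conjM_one {α : Type*} [DecidableEq α] [Fintype α] : conjM (1 : Matrix α α ℂ) = 1 := by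
  ext i j; by_cases h : i = j <;> simp [conjM_apply, Matrix.one_apply, h]

lemma conjM_sub {α β : Type*} (X Y : Matrix α β ℂ) : conjM (X - Y) = conjM X - conjM Y := by
  ext i j; simp [conjM_apply, Matrix.sub_apply]

lemma conjM_smul {α β : Type*} (z : ℂ) (X : Matrix α β ℂ) :
    conjM (z • X) = (starRingEnd ℂ) z • conjM X := by
  ext i j; simp [conjM_apply, Matrix.smul_apply, _root_.map_mul]

lemma conjM_inv {α : Type*} [Fintype α] [DecidableEq α] (X : Matrix α α ℂ) :
    conjM X⁻¹ = (conjM X)⁻¹ := by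
  rw [Matrix.inv_def, Matrix.inv_def]
  have hadj : conjM X.adjugate = (conjM X).adjugate := by
    have := (starRingEnd ℂ).map_adjugate X
    simpa [conjM, RingHom.mapMatrix_apply] using this
  have hdet : (starRingEnd ℂ) X.det = (conjM X).det := by
    have := (starRingEnd ℂ).map_det X
    simpa [conjM, RingHom.mapMatrix_apply] using this
  rw [← hadj, ← hdet]
  ext i j
  simp only [conjM_apply, Matrix.smul_apply, smul_eq_mul, _root_.map_mul]
  congr 1
  simp [Ring.inverse_eq_inv', map_inv₀]

lemma conjM_transpose_eq_conjTranspose {α β : Type*} (X : Matrix α β ℂ) :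
    (conjM X)ᵀ = Xᴴ := by
  ext i j; simp [conjM_apply, Matrix.conjTranspose_apply, Matrix.transpose_apply]

/-- block diagonal complex matrix with block index first -/
def bdiag {N n : ℕ} (blk : Fin N → Matrix (Fin n) (Fin n) ℂ) :
    Matrix (Fin N × Fin n) (Fin N × Fin n) ℂ :=
  Matrix.of fun p q => if p.1 = q.1 then blk p.1 p.2 q.2 else 0

lemma bdiag_apply {N n : ℕ} (blk : Fin N → Matrix (Fin n) (Fin n) ℂ) (p q : Fin N × Fin n) :
    bdiag blk p q = if p.1 = q.1 then blk p.1 p.2 q.2 else 0 := rfl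

lemma bdiag_mul {N n : ℕ} (f g : Fin N → Matrix (Fin n) (Fin n) ℂ) :
    bdiag f * bdiag g = bdiag (fun i => f i * g i) := by
  ext ⟨i, a⟩ ⟨j, b⟩
  rw [Matrix.mul_apply, Fintype.sum_prod_type]
  simp only [bdiag_apply, Matrix.of_apply, ite_mul, zero_mul, mul_ite, mul_zero]
  by_cases h : i = j
  · subst h
    rw [Finset.sum_eq_single i]
    · simp [Matrix.mul_apply]
    · intro k _ hk; simp [Ne.symm hk]
    · simp
  · simp only [if_neg h]
    refine Finset.sum_eq_zero fun k _ => ?_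
    by_cases hik : i = k
    · subst hik; simp [h]
    · simp only [if_neg hik]
      simp

lemma bdiag_one {N n : ℕ} : bdiag (fun _ : Fin N => (1 : Matrix (Fin n) (Fin n) ℂ)) = 1 := by
  ext ⟨i, a⟩ ⟨j, b⟩
  by_cases h : i = j <;> simp [bdiag_apply, Matrix.one_apply, Prod.ext_iff, h]

lemma bdiag_sub {N n : ℕ} (f g : Fin N → Matrix (Fin n) (Fin n) ℂ) :
    bdiag f - bdiag g = bdiag (fun i => f i - g i) := by
  ext ⟨i, a⟩ ⟨j, b⟩
  by_cases h : i = j <;> simp [bdiag_apply, Matrix.sub_apply, h]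

lemma bdiag_add {N n : ℕ} (f g : Fin N → Matrix (Fin n) (Fin n) ℂ) :
    bdiag f + bdiag g = bdiag (fun i => f i + g i) := by
  ext ⟨i, a⟩ ⟨j, b⟩
  by_cases h : i = j <;> simp [bdiag_apply, Matrix.add_apply, h]

lemma bdiag_inv {N n : ℕ} (f : Fin N → Matrix (Fin n) (Fin n) ℂ)
    (hf : ∀ i, IsUnit (f i).det) : (bdiag f)⁻¹ = bdiag (fun i => (f i)⁻¹) := by
  apply Matrix.inv_eq_right_inv
  rw [bdiag_mul]
  rw [show (fun i => f i * (f i)⁻¹) = fun _ : Fin N => (1 : Matrix (Fin n) (Fin n) ℂ) from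
    funext fun i => Matrix.mul_nonsing_inv _ (hf i)]
  exact bdiag_one

lemma bdiag_isUnit_det {N n : ℕ} (f : Fin N → Matrix (Fin n) (Fin n) ℂ)
    (hf : ∀ i, IsUnit (f i).det) : IsUnit (bdiag f).det := by
  have h : bdiag f * bdiag (fun i => (f i)⁻¹) = 1 := by
    rw [bdiag_mul]
    rw [show (fun i => f i * (f i)⁻¹) = fun _ : Fin N => (1 : Matrix (Fin n) (Fin n) ℂ) from
      funext fun i => Matrix.mul_nonsing_inv _ (hf i)]
    exact bdiag_one
  have hdet : (bdiag f).det * (bdiag (fun i => (f i)⁻¹)).det = 1 := by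
    rw [← Matrix.det_mul, h, Matrix.det_one]
  exact IsUnit.of_mul_eq_one _ hdet

lemma frobC_bdiag {N n : ℕ} (f : Fin N → Matrix (Fin n) (Fin n) ℂ) :
    frobC (bdiag f) = ∑ i, frobC (f i) := by
  unfold frobC
  rw [Fintype.sum_prod_type]
  refine Finset.sum_congr rfl fun i _ => ?_
  refine Finset.sum_congr rfl fun a _ => ?_
  rw [Fintype.sum_prod_type]
  rw [Finset.sum_eq_single i]
  · simp [bdiag_apply]
  · intro j _ hj
    refine Finset.sum_eq_zero fun b _ => ?_
    simp [bdiag_apply, Ne.symm hj]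
  · simp

lemma cplx_one_kron {N n : ℕ} (A : Matrix (Fin n) (Fin n) ℝ) :
    cplx ((1 : Matrix (Fin N) (Fin N) ℝ) ⊗ₖ A) = bdiag (fun _ => cplx A) := by
  ext ⟨i, a⟩ ⟨j, b⟩
  by_cases h : i = j <;>
    simp [cplx_apply, bdiag_apply, Matrix.kroneckerMap_apply, Matrix.one_apply, h]

lemma cplx_diag_kron {N n : ℕ} (d : Fin N → ℝ) (B : Matrix (Fin n) (Fin n) ℝ) :
    cplx (Matrix.diagonal d ⊗ₖ B) = bdiag (fun i => (d i : ℂ) • cplx B) := by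
  ext ⟨i, a⟩ ⟨j, b⟩
  simp only [cplx_apply, Matrix.kroneckerMap_apply, bdiag_apply, Matrix.of_apply,
    Matrix.smul_apply, smul_eq_mul]
  by_cases h : i = j
  · subst h; rw [Matrix.diagonal_apply_eq, if_pos rfl]; push_cast; rfl
  · rw [Matrix.diagonal_apply_ne _ h, if_neg h]; simp

lemma smul_one_eq_bdiag {N n : ℕ} (z : ℂ) :
    z • (1 : Matrix (Fin N × Fin n) (Fin N × Fin n) ℂ) = bdiag (fun _ => z • 1) := by
  ext ⟨i, a⟩ ⟨j, b⟩
  by_cases h : i = j <;>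
    simp [bdiag_apply, Matrix.smul_apply, Matrix.one_apply, Prod.ext_iff, h]

/-- the set of frequencies at which the resolvent is singular -/
def Zdet {ι : Type*} [Fintype ι] [DecidableEq ι] (Mc : Matrix ι ι ℂ) : Set ℝ :=
  {ω : ℝ | ¬ IsUnit ((((ω : ℂ) * Complex.I) • (1 : Matrix ι ι ℂ) - Mc).det)}

lemma Zdet_finite {ι : Type*} [Fintype ι] [DecidableEq ι] (Mc : Matrix ι ι ℂ) : (Zdet Mc).Finite := by
  have hsub : Zdet Mc ⊆ (fun ω : ℝ => (ω : ℂ) * Complex.I) ⁻¹' (spectrum ℂ Mc) := by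
    intro ω hω
    rw [Set.mem_preimage, spectrum.mem_iff]
    intro hunit
    rw [Algebra.algebraMap_eq_smul_one] at hunit
    exact hω ((Matrix.isUnit_iff_isUnit_det _).mp hunit)
  have hinj : Function.Injective (fun ω : ℝ => (ω : ℂ) * Complex.I) := by
    intro a b hab
    simpa using congrArg (fun z => (z * (-Complex.I)).re) hab
  exact ((Matrix.finite_spectrum Mc).preimage hinj.injOn).subset hsub

lemma Zdet_ae {ι : Type*} [Fintype ι] [DecidableEq ι] (Mc : Matrix ι ι ℂ) : ∀ᵐ ω : ℝ, ω ∉ Zdet Mc :=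
  MeasureTheory.measure_eq_zero_iff_ae_notMem.mp ((Zdet_finite Mc).measure_zero _)

section Resolvent
attribute [local instance] Matrix.frobeniusSeminormedAddCommGroup Matrix.frobeniusNormedSpace

lemma resolvent_bound {q : ℕ} (H : Matrix (Fin q) (Fin q) ℂ)
    (hH : ∀ ω : ℝ, IsUnit ((((ω : ℂ) * Complex.I) • (1 : Matrix (Fin q) (Fin q) ℂ) - H).det)) :
    ∃ C : ℝ, ∀ ω : ℝ,
      frobC ((((ω : ℂ) * Complex.I) • (1 : Matrix (Fin q) (Fin q) ℂ) - H)⁻¹) * (1 + ω ^ 2) ≤ C := by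
  classical
  set T : ℝ → Matrix (Fin q) (Fin q) ℂ :=
    fun ω => ((ω : ℂ) * Complex.I) • (1 : Matrix (Fin q) (Fin q) ℂ) - H with hTdef
  have hTcont : Continuous T := by
    apply Continuous.sub _ continuous_const
    exact (Complex.continuous_ofReal.mul continuous_const).smul continuous_const
  have hdet : ∀ ω, (T ω).det ≠ 0 := by
    intro ω h
    have h' : ((((ω : ℂ) * Complex.I) • (1 : Matrix (Fin q) (Fin q) ℂ) - H)).det = 0 := h
    have hu := hH ω
    rw [h'] at hu
    simp at hu
  have hGcont : Continuous fun ω => (T ω)⁻¹ := by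
    have he : (fun ω => (T ω)⁻¹) = fun ω => ((T ω).det)⁻¹ • (T ω).adjugate := by
      funext ω; rw [Matrix.inv_def, Ring.inverse_eq_inv']
    rw [he]
    exact (hTcont.matrix_det.inv₀ hdet).smul hTcont.matrix_adjugate
  set φ : ℝ → ℝ := fun ω => frobC ((T ω)⁻¹) * (1 + ω ^ 2) with hφdef
  have hφcont : Continuous φ :=
    (continuous_frobC hGcont).mul (by continuity)
  set R : ℝ := 2 * ‖H‖ + 2 with hRdef
  have hR1 : (1 : ℝ) ≤ R := by rw [hRdef]; nlinarith [norm_nonneg H]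
  obtain ⟨C₁, hC₁⟩ := (isCompact_Icc (a := -R) (b := R)).exists_bound_of_continuousOn
    hφcont.continuousOn
  refine ⟨max C₁ (8 * ‖(1 : Matrix (Fin q) (Fin q) ℂ)‖ ^ 2), fun ω => ?_⟩
  by_cases hω : |ω| ≤ R
  · refine le_trans ?_ (le_max_left _ _)
    have := hC₁ ω (by rw [Set.mem_Icc]; exact abs_le.mp hω)
    exact le_trans (le_abs_self _) this
  · push_neg at hω
    refine le_trans ?_ (le_max_right _ _)
    have hω1 : (1 : ℝ) ≤ |ω| := le_trans hR1 hω.le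
    have hωpos : (0 : ℝ) < |ω| := lt_of_lt_of_le zero_lt_one hω1
    set G := (T ω)⁻¹ with hGdef
    have hTG : T ω * G = 1 := Matrix.mul_nonsing_inv _ (hH ω)
    have hkey : ((ω : ℂ) * Complex.I) • G = 1 + H * G := by
      have h0 : (((ω : ℂ) * Complex.I) • (1 : Matrix (Fin q) (Fin q) ℂ) - H) * G = 1 := hTG
      rw [Matrix.sub_mul, Matrix.smul_mul, Matrix.one_mul] at h0
      rw [← h0]; abel
    have hnorm : |ω| * ‖G‖ ≤ ‖(1 : Matrix (Fin q) (Fin q) ℂ)‖ + ‖H‖ * ‖G‖ := by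
      have h1 : ‖((ω : ℂ) * Complex.I) • G‖ = |ω| * ‖G‖ := by
        rw [norm_smul]
        congr 1
        simp
      calc |ω| * ‖G‖ = ‖((ω : ℂ) * Complex.I) • G‖ := h1.symm
        _ = ‖1 + H * G‖ := by rw [hkey]
        _ ≤ ‖(1 : Matrix (Fin q) (Fin q) ℂ)‖ + ‖H * G‖ := norm_add_le _ _
        _ ≤ ‖(1 : Matrix (Fin q) (Fin q) ℂ)‖ + ‖H‖ * ‖G‖ :=
            add_le_add le_rfl (Matrix.frobenius_norm_mul H G)
    have hHR : ‖H‖ ≤ |ω| / 2 := by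
      rw [hRdef] at hω
      nlinarith [norm_nonneg H]
    have hkey2 : ‖G‖ * |ω| ≤ 2 * ‖(1 : Matrix (Fin q) (Fin q) ℂ)‖ := by
      nlinarith [norm_nonneg G, mul_le_mul_of_nonneg_right hHR (norm_nonneg G)]
    have h4 : (‖G‖ * |ω|) ^ 2 ≤ (2 * ‖(1 : Matrix (Fin q) (Fin q) ℂ)‖) ^ 2 :=
      pow_le_pow_left₀ (by positivity) hkey2 2
    have h5 : ‖G‖ ^ 2 * ω ^ 2 ≤ 4 * ‖(1 : Matrix (Fin q) (Fin q) ℂ)‖ ^ 2 := by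
      nlinarith [_root_.sq_abs ω]
    have hfq : frobC G = ‖G‖ ^ 2 := frobC_eq_sq_norm G
    have hω2 : 1 + ω ^ 2 ≤ 2 * ω ^ 2 := by nlinarith [_root_.sq_abs ω, hω1, abs_nonneg ω]
    calc frobC G * (1 + ω ^ 2) = ‖G‖ ^ 2 * (1 + ω ^ 2) := by rw [hfq]
      _ ≤ ‖G‖ ^ 2 * (2 * ω ^ 2) := by nlinarith [sq_nonneg ‖G‖]
      _ = 2 * (‖G‖ ^ 2 * ω ^ 2) := by ring
      _ ≤ 8 * ‖(1 : Matrix (Fin q) (Fin q) ℂ)‖ ^ 2 := by nlinarith [h5]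

end Resolvent
lemma frobC_smul {α β : Type*} [Fintype α] [Fintype β] (z : ℂ) (X : Matrix α β ℂ) :
    frobC (z • X) = Complex.normSq z * frobC X := by
  unfold frobC
  rw [Finset.mul_sum]
  refine Finset.sum_congr rfl fun i _ => ?_
  rw [Finset.mul_sum]
  refine Finset.sum_congr rfl fun j _ => ?_
  simp [Matrix.smul_apply, _root_.map_mul]

lemma continuous_matrix_inv {q : ℕ} {T : ℝ → Matrix (Fin q) (Fin q) ℂ} (hT : Continuous T)
    (hdet : ∀ ω, IsUnit (T ω).det) : Continuous fun ω => (T ω)⁻¹ := by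
  have he : (fun ω => (T ω)⁻¹) = fun ω => ((T ω).det)⁻¹ • (T ω).adjugate := by
    funext ω; rw [Matrix.inv_def, Ring.inverse_eq_inv']
  rw [he]
  exact (hT.matrix_det.inv₀ fun ω => (isUnit_iff_ne_zero.mp (hdet ω))).smul hT.matrix_adjugate

lemma hurwitz_isUnit {q : ℕ} {H : Matrix (Fin q) (Fin q) ℂ} (hH : IsHurwitz H) (ω : ℝ) :
    IsUnit ((((ω : ℂ) * Complex.I) • (1 : Matrix (Fin q) (Fin q) ℂ) - H).det) := by
  by_contra h
  have hmem : (ω : ℂ) * Complex.I ∈ spectrum ℂ H := by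
    rw [spectrum.mem_iff, Algebra.algebraMap_eq_smul_one]
    intro hu
    exact h ((Matrix.isUnit_iff_isUnit_det _).mp hu)
  have := hH _ hmem
  simp [Complex.mul_I_re] at this

lemma PtP_isUnit {N k : ℕ} (c : Fin N → Fin k) (hc : Function.Surjective c)
    (P : Matrix (Fin N) (Fin k) ℝ) (hP : P = Matrix.of fun i j => if c i = j then 1 else 0) :
    IsUnit (Pᵀ * P).det := by
  classical
  have hdiag : Pᵀ * P =
      Matrix.diagonal (fun j => ((Finset.univ.filter (fun i => c i = j)).card : ℝ)) := by
    ext j j'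
    rw [Matrix.mul_apply]
    by_cases h : j = j'
    · subst h
      rw [Matrix.diagonal_apply_eq]
      rw [Finset.card_filter]
      push_cast
      refine Finset.sum_congr rfl fun i _ => ?_
      by_cases hi : c i = j <;> simp [hP, Matrix.transpose_apply, hi]
    · rw [Matrix.diagonal_apply_ne _ h]
      refine Finset.sum_eq_zero fun i _ => ?_
      by_cases hi : c i = j
      · have hi' : c i ≠ j' := fun hh => h (hi ▸ hh ▸ rfl)
        simp [hP, Matrix.transpose_apply, hi, hi', h]
      · simp [hP, Matrix.transpose_apply, hi]
  rw [hdiag, Matrix.det_diagonal]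
  rw [isUnit_iff_ne_zero]
  refine Finset.prod_ne_zero_iff.mpr fun j _ => ?_
  have : (Finset.univ.filter (fun i => c i = j)).Nonempty := by
    obtain ⟨i, hi⟩ := hc j
    exact ⟨i, by simp [hi]⟩
  have hcard := Finset.card_pos.mpr this
  exact_mod_cast Nat.pos_iff_ne_zero.mp hcard

lemma LP_eq {N k : ℕ} (L : Matrix (Fin N) (Fin N) ℝ) (P : Matrix (Fin N) (Fin k) ℝ)
    (hAEP : Submodule.map L.mulVecLin (LinearMap.range P.mulVecLin) ≤ LinearMap.range P.mulVecLin)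
    (hPtP : IsUnit (Pᵀ * P).det)
    (Lhat : Matrix (Fin k) (Fin k) ℝ) (hLhat : Lhat = (Pᵀ * P)⁻¹ * (Pᵀ * L * P)) :
    L * P = P * Lhat := by
  classical
  have hcol : ∀ j : Fin k, ∃ u : Fin k → ℝ, P.mulVec u = (L * P).mulVec (Pi.single j 1) := by
    intro j
    have hmem : (L * P).mulVec (Pi.single j 1) ∈
        Submodule.map L.mulVecLin (LinearMap.range P.mulVecLin) := by
      refine ⟨P.mulVec (Pi.single j 1), ⟨Pi.single j 1, rfl⟩, ?_⟩
      rw [Matrix.mulVecLin_apply, Matrix.mulVec_mulVec]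
    obtain ⟨u, hu⟩ := hAEP hmem
    exact ⟨u, hu⟩
  choose u hu using hcol
  set W : Matrix (Fin k) (Fin k) ℝ := Matrix.of fun i j => u j i with hW
  have hLPW : L * P = P * W := by
    ext i j
    have h2 := congrFun (hu j) i
    rw [Matrix.mulVec_single] at h2
    simp only [MulOpposite.op_one, one_smul] at h2
    calc (L * P) i j = (P *ᵥ u j) i := h2.symm
      _ = (P * W) i j := by
          simp [Matrix.mulVec, dotProduct, Matrix.mul_apply, hW]
  have hWeq : Lhat = W := by
    rw [hLhat, Matrix.mul_assoc Pᵀ L P, hLPW, ← Matrix.mul_assoc Pᵀ P W,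
      Matrix.nonsing_inv_mul_cancel_left _ _ hPtP]
  rw [hLPW, hWeq]
lemma sandwich_mul {α : Type*} [Fintype α] [DecidableEq α] {W Wi X Y : Matrix α α ℂ}
    (h : Wi * W = 1) : (W * X * Wi) * (W * Y * Wi) = W * (X * Y) * Wi := by
  rw [Matrix.mul_assoc (W * X) Wi (W * Y * Wi), ← Matrix.mul_assoc Wi (W * Y) Wi,
    ← Matrix.mul_assoc Wi W Y, h, Matrix.one_mul, ← Matrix.mul_assoc (W * X) Y Wi,
    Matrix.mul_assoc W X Y]

lemma conj_netlike {α β γ : Type*} [Fintype α] [Fintype β] [Fintype γ] [DecidableEq β]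
    (Cm : Matrix α β ℝ) (Am : Matrix β β ℝ) (Bm : Matrix β γ ℝ) (s : ℂ) :
    cplx Cm * ((starRingEnd ℂ) s • (1 : Matrix β β ℂ) - cplx Am)⁻¹ * cplx Bm
      = conjM (cplx Cm * (s • (1 : Matrix β β ℂ) - cplx Am)⁻¹ * cplx Bm) := by
  rw [conjM_mul, conjM_mul, conjM_cplx, conjM_cplx, conjM_inv, conjM_sub, conjM_smul,
    conjM_one, conjM_cplx]
lemma netShat_eq_proj {N k n r m : ℕ} (L : Matrix (Fin N) (Fin N) ℝ) (P : Matrix (Fin N) (Fin k) ℝ)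
    (Lhat : Matrix (Fin k) (Fin k) ℝ) (Mhat : Matrix (Fin k) (Fin m) ℝ)
    (A B : Matrix (Fin n) (Fin n) ℝ) (E : Matrix (Fin n) (Fin r) ℝ)
    (M : Matrix (Fin N) (Fin m) ℝ) (Pr : Matrix (Fin N) (Fin N) ℝ)
    (hint : ((1 : Matrix (Fin N) (Fin N) ℝ) ⊗ₖ A - L ⊗ₖ B) * (P ⊗ₖ (1 : Matrix (Fin n) (Fin n) ℝ))
      = (P ⊗ₖ (1 : Matrix (Fin n) (Fin n) ℝ)) * ((1 : Matrix (Fin k) (Fin k) ℝ) ⊗ₖ A - Lhat ⊗ₖ B))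
    (hcommA : (Pr ⊗ₖ (1 : Matrix (Fin n) (Fin n) ℝ)) * ((1 : Matrix (Fin N) (Fin N) ℝ) ⊗ₖ A - L ⊗ₖ B)
      = ((1 : Matrix (Fin N) (Fin N) ℝ) ⊗ₖ A - L ⊗ₖ B) * (Pr ⊗ₖ (1 : Matrix (Fin n) (Fin n) ℝ)))
    (hcommL : (Pr ⊗ₖ (1 : Matrix (Fin n) (Fin n) ℝ)) * (L ⊗ₖ (1 : Matrix (Fin n) (Fin n) ℝ))
      = (L ⊗ₖ (1 : Matrix (Fin n) (Fin n) ℝ)) * (Pr ⊗ₖ (1 : Matrix (Fin n) (Fin n) ℝ)))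
    (hPrMk : (Pr ⊗ₖ (1 : Matrix (Fin n) (Fin n) ℝ)) * (M ⊗ₖ E)
      = (P ⊗ₖ (1 : Matrix (Fin n) (Fin n) ℝ)) * (Mhat ⊗ₖ E))
    (s : ℂ)
    (hT : IsUnit ((s • (1 : Matrix (Fin N × Fin n) (Fin N × Fin n) ℂ)
      - cplx ((1 : Matrix (Fin N) (Fin N) ℝ) ⊗ₖ A - L ⊗ₖ B)).det))
    (hTh : IsUnit ((s • (1 : Matrix (Fin k × Fin n) (Fin k × Fin n) ℂ)
      - cplx ((1 : Matrix (Fin k) (Fin k) ℝ) ⊗ₖ A - Lhat ⊗ₖ B)).det)) :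
    netShat L P Lhat Mhat A B E s
      = cplx (Pr ⊗ₖ (1 : Matrix (Fin n) (Fin n) ℝ)) * netS L A B E M s := by
  set T := s • (1 : Matrix (Fin N × Fin n) (Fin N × Fin n) ℂ)
    - cplx ((1 : Matrix (Fin N) (Fin N) ℝ) ⊗ₖ A - L ⊗ₖ B) with hTdef
  set Th := s • (1 : Matrix (Fin k × Fin n) (Fin k × Fin n) ℂ)
    - cplx ((1 : Matrix (Fin k) (Fin k) ℝ) ⊗ₖ A - Lhat ⊗ₖ B) with hThdef
  set cP1 := cplx (P ⊗ₖ (1 : Matrix (Fin n) (Fin n) ℝ)) with hcP1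
  set Qc := cplx (Pr ⊗ₖ (1 : Matrix (Fin n) (Fin n) ℝ)) with hQc
  have hTint : T * cP1 = cP1 * Th := by
    rw [hTdef, hThdef, hcP1, Matrix.sub_mul, Matrix.mul_sub, Matrix.smul_mul, Matrix.one_mul,
      Matrix.mul_smul, Matrix.mul_one, ← cplx_mul, ← cplx_mul, hint]
  have hswap : cP1 * Th⁻¹ = T⁻¹ * cP1 := by
    have h1 : T⁻¹ * (T * (cP1 * Th⁻¹)) = cP1 * Th⁻¹ := Matrix.nonsing_inv_mul_cancel_left _ _ hT
    rw [← h1, ← Matrix.mul_assoc T cP1 Th⁻¹, hTint, Matrix.mul_assoc cP1 Th Th⁻¹,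
      Matrix.mul_nonsing_inv _ hTh, Matrix.mul_one]
  have hQT : Qc * T = T * Qc := by
    rw [hTdef, hQc, Matrix.mul_sub, Matrix.sub_mul, Matrix.mul_smul, Matrix.mul_one,
      Matrix.smul_mul, Matrix.one_mul, ← cplx_mul, ← cplx_mul, hcommA]
  have hQTi : Qc * T⁻¹ = T⁻¹ * Qc := by
    calc Qc * T⁻¹ = T⁻¹ * (T * (Qc * T⁻¹)) := (Matrix.nonsing_inv_mul_cancel_left _ _ hT).symm
      _ = T⁻¹ * (Qc * (T * T⁻¹)) := by rw [← Matrix.mul_assoc T Qc T⁻¹, ← hQT, Matrix.mul_assoc]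
      _ = T⁻¹ * Qc := by rw [Matrix.mul_nonsing_inv _ hT, Matrix.mul_one]
  show cplx ((L * P) ⊗ₖ (1 : Matrix (Fin n) (Fin n) ℝ)) * Th⁻¹ * cplx (Mhat ⊗ₖ E)
      = Qc * (cplx (L ⊗ₖ (1 : Matrix (Fin n) (Fin n) ℝ)) * T⁻¹ * cplx (M ⊗ₖ E))
  have hLP1 : cplx ((L * P) ⊗ₖ (1 : Matrix (Fin n) (Fin n) ℝ))
      = cplx (L ⊗ₖ (1 : Matrix (Fin n) (Fin n) ℝ)) * cP1 := by
    rw [hcP1, ← cplx_mul, ← Matrix.mul_kronecker_mul, Matrix.mul_one]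
  have hPM : cP1 * cplx (Mhat ⊗ₖ E) = Qc * cplx (M ⊗ₖ E) := by
    rw [hcP1, hQc, ← cplx_mul, ← cplx_mul, ← hPrMk]
  have hLQ : cplx (L ⊗ₖ (1 : Matrix (Fin n) (Fin n) ℝ)) * Qc
      = Qc * cplx (L ⊗ₖ (1 : Matrix (Fin n) (Fin n) ℝ)) := by
    rw [hQc, ← cplx_mul, ← cplx_mul, ← hcommL]
  calc cplx ((L * P) ⊗ₖ (1 : Matrix (Fin n) (Fin n) ℝ)) * Th⁻¹ * cplx (Mhat ⊗ₖ E)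
      = cplx (L ⊗ₖ (1 : Matrix (Fin n) (Fin n) ℝ)) * (cP1 * Th⁻¹) * cplx (Mhat ⊗ₖ E) := by
        rw [hLP1, Matrix.mul_assoc (cplx (L ⊗ₖ (1 : Matrix (Fin n) (Fin n) ℝ))) cP1 Th⁻¹]
    _ = cplx (L ⊗ₖ (1 : Matrix (Fin n) (Fin n) ℝ)) * (T⁻¹ * cP1) * cplx (Mhat ⊗ₖ E) := by
        rw [hswap]
    _ = cplx (L ⊗ₖ (1 : Matrix (Fin n) (Fin n) ℝ)) * T⁻¹ * (cP1 * cplx (Mhat ⊗ₖ E)) := by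
        simp only [Matrix.mul_assoc]
    _ = cplx (L ⊗ₖ (1 : Matrix (Fin n) (Fin n) ℝ)) * T⁻¹ * (Qc * cplx (M ⊗ₖ E)) := by
        rw [hPM]
    _ = cplx (L ⊗ₖ (1 : Matrix (Fin n) (Fin n) ℝ)) * (T⁻¹ * Qc) * cplx (M ⊗ₖ E) := by
        simp only [Matrix.mul_assoc]
    _ = cplx (L ⊗ₖ (1 : Matrix (Fin n) (Fin n) ℝ)) * (Qc * T⁻¹) * cplx (M ⊗ₖ E) := by
        rw [hQTi]
    _ = (cplx (L ⊗ₖ (1 : Matrix (Fin n) (Fin n) ℝ)) * Qc) * (T⁻¹ * cplx (M ⊗ₖ E)) := by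
        simp only [Matrix.mul_assoc]
    _ = (Qc * cplx (L ⊗ₖ (1 : Matrix (Fin n) (Fin n) ℝ))) * (T⁻¹ * cplx (M ⊗ₖ E)) := by
        rw [hLQ]
    _ = Qc * (cplx (L ⊗ₖ (1 : Matrix (Fin n) (Fin n) ℝ)) * T⁻¹ * cplx (M ⊗ₖ E)) := by
        simp only [Matrix.mul_assoc]
end Stmt7
end

open Stmt7 MeasureTheory in
/-- for clustering according to an almost equitable partition the H₂ error
satisfies `‖S − Ŝ‖²_{H₂} = ‖S‖²_{H₂} − ‖Ŝ‖²_{H₂}`. -/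
theorem stmt7 {N k n r m : ℕ} (hm : 0 < m) (L : Matrix (Fin N) (Fin N) ℝ)
    (hLpsd : L.PosSemidef) (hL1 : L.mulVec (fun _ => 1) = 0)
    (hLker : LinearMap.ker L.mulVecLin = Submodule.span ℝ {(fun _ => 1 : Fin N → ℝ)})
    (A B : Matrix (Fin n) (Fin n) ℝ) (E : Matrix (Fin n) (Fin r) ℝ)
    (v : Fin m → Fin N) (hv : Function.Injective v)
    (M : Matrix (Fin N) (Fin m) ℝ)
    (hM : M = Matrix.of fun i j => if i = v j then 1 else 0)
    (hsync : ∀ lam ∈ spectrum ℝ L, lam ≠ 0 → IsHurwitz (cplx (A - lam • B)))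
    (c : Fin N → Fin k) (hc : Function.Surjective c)
    (P : Matrix (Fin N) (Fin k) ℝ)
    (hP : P = Matrix.of fun i j => if c i = j then 1 else 0)
    (hAEP : Submodule.map L.mulVecLin (LinearMap.range P.mulVecLin) ≤
      LinearMap.range P.mulVecLin)
    (Lhat : Matrix (Fin k) (Fin k) ℝ) (hLhat : Lhat = (Pᵀ * P)⁻¹ * (Pᵀ * L * P))
    (Mhat : Matrix (Fin k) (Fin m) ℝ) (hMhat : Mhat = (Pᵀ * P)⁻¹ * (Pᵀ * M)) :
    H2normSq (fun s => netS L A B E M s - netShat L P Lhat Mhat A B E s) =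
      H2normSq (netS L A B E M) - H2normSq (netShat L P Lhat Mhat A B E) := by
  classical
  have hsym : Lᵀ = L := by
    have h : Lᴴ = L := hLpsd.1
    rwa [Matrix.conjTranspose_eq_transpose_of_trivial] at h
  have hPtP : IsUnit (Pᵀ * P).det := PtP_isUnit c hc P hP
  have hLP : L * P = P * Lhat := LP_eq L P hAEP hPtP Lhat hLhat
  -- the orthogonal projection onto the range of P
  set Pr : Matrix (Fin N) (Fin N) ℝ := P * ((Pᵀ * P)⁻¹ * Pᵀ) with hPrdef
  have hPrP : Pr * P = P := by
    calc Pr * P = P * ((Pᵀ * P)⁻¹ * (Pᵀ * P)) := by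
          rw [hPrdef]; simp only [Matrix.mul_assoc]
      _ = P := by rw [Matrix.nonsing_inv_mul _ hPtP, Matrix.mul_one]
  have hPrT : Prᵀ = Pr := by
    rw [hPrdef, Matrix.transpose_mul, Matrix.transpose_mul, Matrix.transpose_transpose,
      Matrix.transpose_nonsing_inv, Matrix.transpose_mul, Matrix.transpose_transpose,
      Matrix.mul_assoc]
  have hPrPr : Pr * Pr = Pr := by
    nth_rewrite 2 [hPrdef]
    rw [← Matrix.mul_assoc, hPrP, ← hPrdef]
  have hPrL : Pr * L = L * Pr := by
    have hLPr : L * Pr = P * (Lhat * ((Pᵀ * P)⁻¹ * Pᵀ)) := by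
      rw [hPrdef, ← Matrix.mul_assoc L P _, hLP, Matrix.mul_assoc]
    have h1 : Pr * (L * Pr) = L * Pr := by
      rw [hLPr, ← Matrix.mul_assoc, hPrP]
    have h2 : (L * Pr)ᵀ = Pr * L := by rw [Matrix.transpose_mul, hPrT, hsym]
    have h4 : (Pr * (L * Pr))ᵀ = (Pr * L) * Pr := by
      rw [Matrix.transpose_mul, h2, hPrT]
    have h5 : Pr * L = (Pr * L) * Pr := by
      rw [← h4, h1, h2]
    have h6 : L * Pr = (Pr * L) * Pr := by rw [← h1, ← Matrix.mul_assoc]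
    rw [h5, ← h6]
  have hPrM : Pr * M = P * Mhat := by
    rw [hMhat, hPrdef]; simp only [Matrix.mul_assoc]
  -- kronecker versions
  have hint : ((1 : Matrix (Fin N) (Fin N) ℝ) ⊗ₖ A - L ⊗ₖ B) * (P ⊗ₖ (1 : Matrix (Fin n) (Fin n) ℝ))
      = (P ⊗ₖ (1 : Matrix (Fin n) (Fin n) ℝ)) * ((1 : Matrix (Fin k) (Fin k) ℝ) ⊗ₖ A - Lhat ⊗ₖ B) := by
    rw [Matrix.sub_mul, Matrix.mul_sub]
    congr 1
    · rw [← Matrix.mul_kronecker_mul, ← Matrix.mul_kronecker_mul]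
      simp only [Matrix.one_mul, Matrix.mul_one]
    · rw [← Matrix.mul_kronecker_mul, ← Matrix.mul_kronecker_mul]
      simp only [Matrix.one_mul, Matrix.mul_one]
      rw [hLP]
  have hcommA : (Pr ⊗ₖ (1 : Matrix (Fin n) (Fin n) ℝ)) * ((1 : Matrix (Fin N) (Fin N) ℝ) ⊗ₖ A - L ⊗ₖ B)
      = ((1 : Matrix (Fin N) (Fin N) ℝ) ⊗ₖ A - L ⊗ₖ B) * (Pr ⊗ₖ (1 : Matrix (Fin n) (Fin n) ℝ)) := by
    rw [Matrix.mul_sub, Matrix.sub_mul]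
    congr 1
    · rw [← Matrix.mul_kronecker_mul, ← Matrix.mul_kronecker_mul]
      simp only [Matrix.one_mul, Matrix.mul_one]
    · rw [← Matrix.mul_kronecker_mul, ← Matrix.mul_kronecker_mul]
      simp only [Matrix.one_mul, Matrix.mul_one]
      rw [hPrL]
  have hcommL : (Pr ⊗ₖ (1 : Matrix (Fin n) (Fin n) ℝ)) * (L ⊗ₖ (1 : Matrix (Fin n) (Fin n) ℝ))
      = (L ⊗ₖ (1 : Matrix (Fin n) (Fin n) ℝ)) * (Pr ⊗ₖ (1 : Matrix (Fin n) (Fin n) ℝ)) := by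
    rw [← Matrix.mul_kronecker_mul, ← Matrix.mul_kronecker_mul]
    simp only [Matrix.one_mul, Matrix.mul_one]
    rw [hPrL]
  have hPrMk : (Pr ⊗ₖ (1 : Matrix (Fin n) (Fin n) ℝ)) * (M ⊗ₖ E)
      = (P ⊗ₖ (1 : Matrix (Fin n) (Fin n) ℝ)) * (Mhat ⊗ₖ E) := by
    rw [← Matrix.mul_kronecker_mul, ← Matrix.mul_kronecker_mul]
    simp only [Matrix.one_mul, Matrix.mul_one]
    rw [hPrM]
  -- complex projector
  set Qc : Matrix (Fin N × Fin n) (Fin N × Fin n) ℂ :=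
    cplx (Pr ⊗ₖ (1 : Matrix (Fin n) (Fin n) ℝ)) with hQcdef
  have hQ2 : Qc * Qc = Qc := by
    rw [hQcdef, ← cplx_mul, ← Matrix.mul_kronecker_mul, hPrPr, Matrix.one_mul]
  have hQh : Qcᴴ = Qc := by
    rw [hQcdef, cplx_conjT, ← Matrix.kroneckerMap_transpose, hPrT, Matrix.transpose_one]
  -- spectral decomposition of L
  have hLH : L.IsHermitian := hLpsd.1
  set U : Matrix (Fin N) (Fin N) ℝ := (hLH.eigenvectorUnitary : Matrix (Fin N) (Fin N) ℝ) with hUdef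
  set dL : Fin N → ℝ := hLH.eigenvalues with hdLdef
  have hspec : L = U * Matrix.diagonal dL * Uᵀ := by
    have h := hLH.spectral_theorem
    rw [Unitary.conjStarAlgAut_apply, Matrix.star_eq_conjTranspose, Matrix.conjTranspose_eq_transpose_of_trivial] at h
    have hco : (RCLike.ofReal ∘ hLH.eigenvalues : Fin N → ℝ) = hLH.eigenvalues := by
      rw [RCLike.ofReal_real_eq_id, Function.id_comp]
    rw [hco] at h
    exact h
  have hUUt : U * Uᵀ = 1 := by
    have h := Matrix.mem_unitaryGroup_iff.mp hLH.eigenvectorUnitary.2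
    rwa [Matrix.star_eq_conjTranspose, Matrix.conjTranspose_eq_transpose_of_trivial] at h
  have hUtU : Uᵀ * U = 1 := mul_eq_one_comm.mp hUUt
  -- blocks
  set Tb : Fin N → ℝ → Matrix (Fin n) (Fin n) ℂ := fun i ω =>
    ((ω : ℂ) * Complex.I) • (1 : Matrix (Fin n) (Fin n) ℂ) - cplx (A - dL i • B) with hTbdef
  have hTbunit : ∀ i, dL i ≠ 0 → ∀ ω : ℝ, IsUnit (Tb i ω).det := fun i hne ω =>
    hurwitz_isUnit (hsync (dL i) (hLH.eigenvalues_mem_spectrum_real i) hne) ω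
  set ZA : Set ℝ := Zdet (cplx A) with hZAdef
  set Zh : Set ℝ := Zdet (cplx ((1 : Matrix (Fin k) (Fin k) ℝ) ⊗ₖ A - Lhat ⊗ₖ B)) with hZhdef
  have hblocks : ∀ ω ∉ ZA, ∀ i, IsUnit (Tb i ω).det := by
    intro ω hω i
    by_cases h0 : dL i = 0
    · have hTb0 : Tb i ω = ((ω : ℂ) * Complex.I) • 1 - cplx A := by
        rw [hTbdef]; simp [h0]
      rw [hTb0]
      exact not_not.mp hω
    · exact hTbunit i h0 ω
  -- unitary conjugation on the big space
  set WU : Matrix (Fin N × Fin n) (Fin N × Fin n) ℂ :=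
    cplx (U ⊗ₖ (1 : Matrix (Fin n) (Fin n) ℝ)) with hWUdef
  set WUt : Matrix (Fin N × Fin n) (Fin N × Fin n) ℂ :=
    cplx (Uᵀ ⊗ₖ (1 : Matrix (Fin n) (Fin n) ℝ)) with hWUtdef
  have hWUl : WU * WUt = 1 := by
    rw [hWUdef, hWUtdef, ← cplx_mul, ← Matrix.mul_kronecker_mul, hUUt]
    simp only [Matrix.one_mul]
    rw [Matrix.one_kronecker_one, cplx_one]
  have hWUr : WUt * WU = 1 := by
    rw [hWUdef, hWUtdef, ← cplx_mul, ← Matrix.mul_kronecker_mul, hUtU]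
    simp only [Matrix.one_mul]
    rw [Matrix.one_kronecker_one, cplx_one]
  have hWUh : WUᴴ = WUt := by
    rw [hWUdef, hWUtdef, cplx_conjT, ← Matrix.kroneckerMap_transpose, Matrix.transpose_one]
  have hWUhW : WUᴴ * WU = 1 := by rw [hWUh]; exact hWUr
  -- conjugating the big resolvent
  have hsand : ∀ (X : Matrix (Fin N) (Fin N) ℝ) (Y : Matrix (Fin n) (Fin n) ℝ),
      WU * cplx (X ⊗ₖ Y) * WUt = cplx ((U * X * Uᵀ) ⊗ₖ Y) := by
    intro X Y
    rw [hWUdef, hWUtdef, ← cplx_mul, ← cplx_mul, ← Matrix.mul_kronecker_mul,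
      ← Matrix.mul_kronecker_mul]
    simp only [Matrix.one_mul, Matrix.mul_one]
  have hAdiag : cplx ((1 : Matrix (Fin N) (Fin N) ℝ) ⊗ₖ A - L ⊗ₖ B)
      = WU * cplx ((1 : Matrix (Fin N) (Fin N) ℝ) ⊗ₖ A - Matrix.diagonal dL ⊗ₖ B) * WUt := by
    rw [cplx_sub, cplx_sub, Matrix.mul_sub, Matrix.sub_mul]
    have e1 : WU * cplx ((1 : Matrix (Fin N) (Fin N) ℝ) ⊗ₖ A) * WUt
        = cplx ((1 : Matrix (Fin N) (Fin N) ℝ) ⊗ₖ A) := by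
      have h := hsand 1 A
      rwa [Matrix.mul_one, hUUt] at h
    have e2 : WU * cplx (Matrix.diagonal dL ⊗ₖ B) * WUt = cplx (L ⊗ₖ B) := by
      have h := hsand (Matrix.diagonal dL) B
      rwa [← hspec] at h
    rw [e1, e2]
  have hconjbig : ∀ ω : ℝ,
      ((ω : ℂ) * Complex.I) • (1 : Matrix (Fin N × Fin n) (Fin N × Fin n) ℂ)
        - cplx ((1 : Matrix (Fin N) (Fin N) ℝ) ⊗ₖ A - L ⊗ₖ B)
      = WU * (((ω : ℂ) * Complex.I) • (1 : Matrix (Fin N × Fin n) (Fin N × Fin n) ℂ)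
        - cplx ((1 : Matrix (Fin N) (Fin N) ℝ) ⊗ₖ A - Matrix.diagonal dL ⊗ₖ B)) * WUt := by
    intro ω
    have hsm : ((ω : ℂ) * Complex.I) • (1 : Matrix (Fin N × Fin n) (Fin N × Fin n) ℂ)
        = WU * (((ω : ℂ) * Complex.I) • (1 : Matrix (Fin N × Fin n) (Fin N × Fin n) ℂ)) * WUt := by
      simp only [Matrix.mul_smul, Matrix.mul_one, Matrix.smul_mul, hWUl]
    rw [Matrix.mul_sub, Matrix.sub_mul, ← hsm, hAdiag]
  have hWUinv : WU⁻¹ = WUt := Matrix.inv_eq_right_inv hWUl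
  have hWUtinv : WUt⁻¹ = WU := Matrix.inv_eq_right_inv hWUr
  -- block-diagonal form
  have hbd : ∀ ω : ℝ,
      ((ω : ℂ) * Complex.I) • (1 : Matrix (Fin N × Fin n) (Fin N × Fin n) ℂ)
        - cplx ((1 : Matrix (Fin N) (Fin N) ℝ) ⊗ₖ A - Matrix.diagonal dL ⊗ₖ B)
      = bdiag (fun i => Tb i ω) := by
    intro ω
    have hfam : (fun i => ((ω : ℂ) * Complex.I) • (1 : Matrix (Fin n) (Fin n) ℂ)
        - (cplx A - (dL i : ℂ) • cplx B)) = fun i => Tb i ω := by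
      funext i
      rw [hTbdef]
      simp only []
      rw [cplx_sub, cplx_smul]
    rw [cplx_sub, cplx_one_kron, cplx_diag_kron, smul_one_eq_bdiag, bdiag_sub, bdiag_sub, hfam]
  have hdet' : ∀ ω ∉ ZA, IsUnit ((((ω : ℂ) * Complex.I) • (1 : Matrix (Fin N × Fin n) (Fin N × Fin n) ℂ)
      - cplx ((1 : Matrix (Fin N) (Fin N) ℝ) ⊗ₖ A - Matrix.diagonal dL ⊗ₖ B)).det) := by
    intro ω hω
    rw [hbd ω]
    exact bdiag_isUnit_det _ (hblocks ω hω)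
  have hdetbig : ∀ ω ∉ ZA, IsUnit ((((ω : ℂ) * Complex.I) • (1 : Matrix (Fin N × Fin n) (Fin N × Fin n) ℂ)
      - cplx ((1 : Matrix (Fin N) (Fin N) ℝ) ⊗ₖ A - L ⊗ₖ B)).det) := by
    intro ω hω
    rw [hconjbig ω, Matrix.det_mul, Matrix.det_mul]
    have h1 : IsUnit WU.det := IsUnit.of_mul_eq_one WUt.det
      (by rw [← Matrix.det_mul, hWUl, Matrix.det_one])
    have h2 : IsUnit WUt.det := IsUnit.of_mul_eq_one WU.det
      (by rw [← Matrix.det_mul, hWUr, Matrix.det_one])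
    exact (h1.mul (hdet' ω hω)).mul h2
  -- explicit value of netS off the singular set
  set Rc : Matrix (Fin N × Fin n) (Fin m × Fin r) ℂ := cplx ((Uᵀ * M) ⊗ₖ E) with hRcdef
  set Kmat : ℝ → Matrix (Fin N × Fin n) (Fin N × Fin n) ℂ :=
    fun ω => bdiag (fun i => (dL i : ℂ) • (Tb i ω)⁻¹) with hKdef
  have hSval : ∀ ω ∉ ZA, netS L A B E M ((ω : ℂ) * Complex.I) = WU * (Kmat ω * Rc) := by
    intro ω hω
    show cplx (L ⊗ₖ (1 : Matrix (Fin n) (Fin n) ℝ)) *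
        (((ω : ℂ) * Complex.I) • (1 : Matrix (Fin N × Fin n) (Fin N × Fin n) ℂ)
          - cplx ((1 : Matrix (Fin N) (Fin N) ℝ) ⊗ₖ A - L ⊗ₖ B))⁻¹ * cplx (M ⊗ₖ E) = _
    have hL1 : cplx (L ⊗ₖ (1 : Matrix (Fin n) (Fin n) ℝ))
        = WU * cplx (Matrix.diagonal dL ⊗ₖ (1 : Matrix (Fin n) (Fin n) ℝ)) * WUt := by
      rw [hsand (Matrix.diagonal dL) 1, ← hspec]
    have hTinv : (((ω : ℂ) * Complex.I) • (1 : Matrix (Fin N × Fin n) (Fin N × Fin n) ℂ)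
          - cplx ((1 : Matrix (Fin N) (Fin N) ℝ) ⊗ₖ A - L ⊗ₖ B))⁻¹
        = WU * (bdiag (fun i => (Tb i ω)⁻¹)) * WUt := by
      rw [hconjbig ω, Matrix.mul_inv_rev, Matrix.mul_inv_rev, hWUinv, hWUtinv,
        hbd ω, bdiag_inv _ (hblocks ω hω), Matrix.mul_assoc]
    rw [hL1, hTinv]
    rw [sandwich_mul hWUr]
    have hDb : cplx (Matrix.diagonal dL ⊗ₖ (1 : Matrix (Fin n) (Fin n) ℝ))
        = bdiag (fun i => (dL i : ℂ) • 1) := by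
      rw [cplx_diag_kron]
      congr 1
      funext i
      rw [cplx_one]
    have hmulK : cplx (Matrix.diagonal dL ⊗ₖ (1 : Matrix (Fin n) (Fin n) ℝ)) *
        bdiag (fun i => (Tb i ω)⁻¹) = Kmat ω := by
      rw [hDb, bdiag_mul]
      have hfam2 : (fun i => ((dL i : ℂ) • 1) * (Tb i ω)⁻¹)
          = fun i => (dL i : ℂ) • (Tb i ω)⁻¹ := by
        funext i
        rw [Matrix.smul_mul, Matrix.one_mul]
      rw [hfam2, hKdef]
    rw [hmulK]
    have hRceq : WUt * cplx (M ⊗ₖ E) = Rc := by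
      rw [hWUtdef, hRcdef, ← cplx_mul, ← Matrix.mul_kronecker_mul, Matrix.one_mul]
    calc WU * Kmat ω * WUt * cplx (M ⊗ₖ E) = WU * (Kmat ω * (WUt * cplx (M ⊗ₖ E))) := by
          simp only [Matrix.mul_assoc]
      _ = WU * (Kmat ω * Rc) := by rw [hRceq]
  -- reduced transfer function is the projection of the full one
  have hQS : ∀ ω : ℝ, ω ∉ ZA → ω ∉ Zh →
      netShat L P Lhat Mhat A B E ((ω : ℂ) * Complex.I)
        = Qc * netS L A B E M ((ω : ℂ) * Complex.I) := by
    intro ω h1 h2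
    exact netShat_eq_proj L P Lhat Mhat A B E M Pr hint hcommA hcommL hPrMk _
      (hdetbig ω h1) (not_not.mp h2)
  -- integrand functions
  set fInt : ℝ → ℝ := fun ω => frobC (netS L A B E M ((ω : ℂ) * Complex.I)) with hfIntdef
  set gInt : ℝ → ℝ := fun ω =>
    frobC (netShat L P Lhat Mhat A B E ((ω : ℂ) * Complex.I)) with hgIntdef
  set hInt : ℝ → ℝ := fun ω => frobC (netS L A B E M ((ω : ℂ) * Complex.I)
    - netShat L P Lhat Mhat A B E ((ω : ℂ) * Complex.I)) with hhIntdef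
  set Fc : ℝ → ℝ := fun ω => frobC (Kmat ω * Rc) with hFcdef
  set Gc : ℝ → ℝ := fun ω => frobC (Qc * (WU * (Kmat ω * Rc))) with hGcdef
  set Hc : ℝ → ℝ := fun ω => frobC ((1 - Qc) * (WU * (Kmat ω * Rc))) with hHcdef
  -- pointwise identities off the singular sets
  have hptF : ∀ ω ∉ ZA, fInt ω = Fc ω := by
    intro ω hω
    rw [hfIntdef, hFcdef]
    simp only []
    rw [hSval ω hω, frobC_unit_mul _ _ hWUhW]
  have hptG : ∀ ω : ℝ, ω ∉ ZA → ω ∉ Zh → gInt ω = Gc ω := by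
    intro ω h1 h2
    rw [hgIntdef, hGcdef]
    simp only []
    rw [hQS ω h1 h2, hSval ω h1]
  have hptH : ∀ ω : ℝ, ω ∉ ZA → ω ∉ Zh → hInt ω = Hc ω := by
    intro ω h1 h2
    rw [hhIntdef, hHcdef]
    simp only []
    rw [hQS ω h1 h2]
    have hfac : netS L A B E M ((ω : ℂ) * Complex.I)
        - Qc * netS L A B E M ((ω : ℂ) * Complex.I)
        = (1 - Qc) * netS L A B E M ((ω : ℂ) * Complex.I) := by
      rw [Matrix.sub_mul, Matrix.one_mul]
    rw [hfac, hSval ω h1]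
  have hsplitpt : ∀ ω : ℝ, ω ∉ ZA → ω ∉ Zh → fInt ω = gInt ω + hInt ω := by
    intro ω h1 h2
    rw [hfIntdef, hgIntdef, hhIntdef]
    simp only []
    rw [hQS ω h1 h2]
    have hfac : netS L A B E M ((ω : ℂ) * Complex.I)
        - Qc * netS L A B E M ((ω : ℂ) * Complex.I)
        = (1 - Qc) * netS L A B E M ((ω : ℂ) * Complex.I) := by
      rw [Matrix.sub_mul, Matrix.one_mul]
    rw [hfac]
    exact frobC_proj_split Qc _ hQ2 hQh
  -- continuity of the regular representatives
  have hTbcont : ∀ i, Continuous (Tb i) := by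
    intro i
    rw [hTbdef]
    exact ((Complex.continuous_ofReal.mul continuous_const).smul continuous_const).sub
      continuous_const
  have hKcont : Continuous Kmat := by
    rw [hKdef]
    apply continuous_matrix
    intro p q
    simp only [bdiag_apply, Matrix.of_apply]
    by_cases hpq : p.1 = q.1
    · simp only [if_pos hpq]
      by_cases h0 : dL p.1 = 0
      · simp only [h0, Complex.ofReal_zero, zero_smul, Matrix.zero_apply]
        exact continuous_const
      · have hcont : Continuous fun ω => (Tb p.1 ω)⁻¹ :=
          continuous_matrix_inv (hTbcont p.1) (fun ω => hTbunit p.1 h0 ω)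
        simp only [Matrix.smul_apply, smul_eq_mul]
        exact continuous_const.mul (hcont.matrix_elem _ _)
    · simp only [if_neg hpq]
      exact continuous_const
  have hFccont : Continuous Fc := by
    rw [hFcdef]
    exact continuous_frobC (hKcont.matrix_mul continuous_const)
  have hGccont : Continuous Gc := by
    rw [hGcdef]
    exact continuous_frobC (continuous_const.matrix_mul
      (continuous_const.matrix_mul (hKcont.matrix_mul continuous_const)))
  have hHccont : Continuous Hc := by
    rw [hHcdef]
    exact continuous_frobC (continuous_const.matrix_mul
      (continuous_const.matrix_mul (hKcont.matrix_mul continuous_const)))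
  -- uniform bound
  have hCex : ∀ i : Fin N, ∃ Ci : ℝ, ∀ ω : ℝ,
      frobC ((dL i : ℂ) • (Tb i ω)⁻¹) * (1 + ω ^ 2) ≤ Ci := by
    intro i
    by_cases h0 : dL i = 0
    · refine ⟨0, fun ω => ?_⟩
      rw [frobC_smul, h0]
      simp
    · obtain ⟨Ci, hCi⟩ := resolvent_bound (cplx (A - dL i • B)) (hTbunit i h0)
      refine ⟨Complex.normSq (dL i) * Ci, fun ω => ?_⟩
      rw [frobC_smul, mul_assoc]
      exact mul_le_mul_of_nonneg_left (hCi ω) (Complex.normSq_nonneg _)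
  choose Cb hCb using hCex
  set Ctot : ℝ := (∑ i, Cb i) * frobC Rc with hCtotdef
  have hFbound : ∀ ω : ℝ, Fc ω * (1 + ω ^ 2) ≤ Ctot := by
    intro ω
    have h1 : frobC (Kmat ω * Rc) ≤ frobC (Kmat ω) * frobC Rc := frobC_mul_le _ _
    have h2 : frobC (Kmat ω) = ∑ i, frobC ((dL i : ℂ) • (Tb i ω)⁻¹) := by
      rw [hKdef]; exact frobC_bdiag _
    have h3 : frobC (Kmat ω) * (1 + ω ^ 2) ≤ ∑ i, Cb i := by
      rw [h2, Finset.sum_mul]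
      exact Finset.sum_le_sum fun i _ => hCb i ω
    have hpos : (0 : ℝ) ≤ 1 + ω ^ 2 := by positivity
    calc Fc ω * (1 + ω ^ 2) ≤ (frobC (Kmat ω) * frobC Rc) * (1 + ω ^ 2) :=
          mul_le_mul_of_nonneg_right h1 hpos
      _ = (frobC (Kmat ω) * (1 + ω ^ 2)) * frobC Rc := by ring
      _ ≤ (∑ i, Cb i) * frobC Rc := mul_le_mul_of_nonneg_right h3 (frobC_nonneg _)
      _ = Ctot := hCtotdef.symm
  have hprojle : ∀ X : Matrix (Fin N × Fin n) (Fin m × Fin r) ℂ,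
      frobC (Qc * X) ≤ frobC X ∧ frobC ((1 - Qc) * X) ≤ frobC X := by
    intro X
    have h := frobC_proj_split Qc X hQ2 hQh
    have h1 := frobC_nonneg (Qc * X)
    have h2 := frobC_nonneg ((1 - Qc) * X)
    constructor <;> linarith
  have hGbound : ∀ ω : ℝ, Gc ω * (1 + ω ^ 2) ≤ Ctot := by
    intro ω
    have hpos : (0 : ℝ) ≤ 1 + ω ^ 2 := by positivity
    refine le_trans (mul_le_mul_of_nonneg_right ?_ hpos) (hFbound ω)
    calc Gc ω ≤ frobC (WU * (Kmat ω * Rc)) := (hprojle _).1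
      _ = Fc ω := frobC_unit_mul _ _ hWUhW
  have hHbound : ∀ ω : ℝ, Hc ω * (1 + ω ^ 2) ≤ Ctot := by
    intro ω
    have hpos : (0 : ℝ) ≤ 1 + ω ^ 2 := by positivity
    refine le_trans (mul_le_mul_of_nonneg_right ?_ hpos) (hFbound ω)
    calc Hc ω ≤ frobC (WU * (Kmat ω * Rc)) := (hprojle _).2
      _ = Fc ω := frobC_unit_mul _ _ hWUhW
  -- integrability
  have hdom : Integrable (fun ω : ℝ => Ctot * (1 + ω ^ 2)⁻¹) volume :=
    integrable_inv_one_add_sq.const_mul Ctot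
  have hintaux : ∀ (F : ℝ → ℝ), Continuous F → (∀ ω, 0 ≤ F ω) →
      (∀ ω : ℝ, F ω * (1 + ω ^ 2) ≤ Ctot) → Integrable F volume := by
    intro F hFcont hFnn hFb
    refine hdom.mono' hFcont.aestronglyMeasurable (ae_of_all _ fun ω => ?_)
    rw [Real.norm_eq_abs, abs_of_nonneg (hFnn ω)]
    have hpos : (0 : ℝ) < 1 + ω ^ 2 := by positivity
    have hb := hFb ω
    rw [← le_div_iff₀ hpos] at hb
    calc F ω ≤ Ctot / (1 + ω ^ 2) := hb
      _ = Ctot * (1 + ω ^ 2)⁻¹ := by rw [div_eq_mul_inv]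
  have hFcint : Integrable Fc volume := hintaux Fc hFccont
    (fun ω => frobC_nonneg _) hFbound
  have hGcint : Integrable Gc volume := hintaux Gc hGccont
    (fun ω => frobC_nonneg _) hGbound
  have hHcint : Integrable Hc volume := hintaux Hc hHccont
    (fun ω => frobC_nonneg _) hHbound
  -- a.e. equalities
  have hae : ∀ᵐ ω : ℝ, ω ∉ ZA ∧ ω ∉ Zh :=
    (Zdet_ae (cplx A)).and (Zdet_ae (cplx ((1 : Matrix (Fin k) (Fin k) ℝ) ⊗ₖ A - Lhat ⊗ₖ B)))
  have haeF : Fc =ᵐ[volume] fInt := hae.mono fun ω hω => (hptF ω hω.1).symm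
  have haeG : Gc =ᵐ[volume] gInt := hae.mono fun ω hω => (hptG ω hω.1 hω.2).symm
  have haeH : Hc =ᵐ[volume] hInt := hae.mono fun ω hω => (hptH ω hω.1 hω.2).symm
  have hfint : Integrable fInt volume := hFcint.congr haeF
  have hgint : Integrable gInt volume := hGcint.congr haeG
  have hhint : Integrable hInt volume := hHcint.congr haeH
  have hintegral : ∫ ω : ℝ, hInt ω = (∫ ω : ℝ, fInt ω) - ∫ ω : ℝ, gInt ω := by
    have h1 : hInt =ᵐ[volume] (fun ω => fInt ω - gInt ω) :=
      hae.mono fun ω hω => by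
        show hInt ω = fInt ω - gInt ω
        rw [hsplitpt ω hω.1 hω.2]; ring
    rw [integral_congr_ae h1, integral_sub hfint hgint]
  -- conjugation symmetry of the integrands
  have hconjS : ∀ ω : ℝ, netS L A B E M (-((ω : ℂ) * Complex.I))
      = conjM (netS L A B E M ((ω : ℂ) * Complex.I)) := by
    intro ω
    have hcs : -((ω : ℂ) * Complex.I) = (starRingEnd ℂ) ((ω : ℂ) * Complex.I) := by
      simp [Complex.ext_iff]
    rw [hcs]
    exact conj_netlike _ _ _ _
  have hconjSh : ∀ ω : ℝ, netShat L P Lhat Mhat A B E (-((ω : ℂ) * Complex.I))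
      = conjM (netShat L P Lhat Mhat A B E ((ω : ℂ) * Complex.I)) := by
    intro ω
    have hcs : -((ω : ℂ) * Complex.I) = (starRingEnd ℂ) ((ω : ℂ) * Complex.I) := by
      simp [Complex.ext_iff]
    rw [hcs]
    exact conj_netlike _ _ _ _
  have hIf : (fun ω : ℝ => ((netS L A B E M (-((ω : ℂ) * Complex.I)))ᵀ *
      netS L A B E M ((ω : ℂ) * Complex.I)).trace.re) = fInt := by
    funext ω
    rw [hconjS ω, conjM_transpose_eq_conjTranspose, trace_re_eq_frobC, hfIntdef]
  have hIg : (fun ω : ℝ => ((netShat L P Lhat Mhat A B E (-((ω : ℂ) * Complex.I)))ᵀ *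
      netShat L P Lhat Mhat A B E ((ω : ℂ) * Complex.I)).trace.re) = gInt := by
    funext ω
    rw [hconjSh ω, conjM_transpose_eq_conjTranspose, trace_re_eq_frobC, hgIntdef]
  have hIh : (fun ω : ℝ => ((netS L A B E M (-((ω : ℂ) * Complex.I))
      - netShat L P Lhat Mhat A B E (-((ω : ℂ) * Complex.I)))ᵀ *
      (netS L A B E M ((ω : ℂ) * Complex.I)
      - netShat L P Lhat Mhat A B E ((ω : ℂ) * Complex.I))).trace.re) = hInt := by
    funext ω
    rw [hconjS ω, hconjSh ω, ← conjM_sub, conjM_transpose_eq_conjTranspose, trace_re_eq_frobC,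
      hhIntdef]
  -- final assembly
  unfold H2normSq
  rw [hIh, hIf, hIg, hintegral]
  ring
end

section
/- Let L ∈ ℝ^{N×N} be symmetric positive semidefinite with L𝟙_N = 0, let π be a partition of {1,…,N} with characteristic matrix P ∈ ℝ^{N×k}, and let 𝒫 = P(PᵀP)⁻¹Pᵀ be the orthogonal projector onto Im P. Then L_AEP := 𝒫L𝒫 + (I_N − 𝒫)L(I_N − 𝒫) is the unique minimizer of ‖L − X‖²_F over all X ∈ ℝ^{N×N} satisfying: (i) (I_N − 𝒫)XP = 0, (ii) X = Xᵀ, (iii) X positive semidefinite, and (iv) X𝟙_N = 0. -/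
open Matrix Filter Topology Function
open scoped Kronecker

section AuxStmt17
open Matrix

lemma frobSq_eq_sum {α β : Type*} [Fintype α] [Fintype β] (M : Matrix α β ℝ) :
    frobSq M = ∑ j, ∑ i, (M i j)^2 := by
  simp [frobSq, Matrix.trace, Matrix.diag, Matrix.mul_apply, sq]

lemma frobSq_nonneg {α β : Type*} [Fintype α] [Fintype β] (M : Matrix α β ℝ) :
    0 ≤ frobSq M := by
  rw [frobSq_eq_sum]; positivity

lemma frobSq_pos {α β : Type*} [Fintype α] [Fintype β] (M : Matrix α β ℝ) (hM : M ≠ 0) :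
    0 < frobSq M := by
  rw [frobSq_eq_sum]
  obtain ⟨i, j, hij⟩ : ∃ i j, M i j ≠ 0 := by
    by_contra h; push_neg at h; exact hM (by ext i j; exact h i j)
  refine Finset.sum_pos' (fun j _ => Finset.sum_nonneg fun i _ => sq_nonneg _)
    ⟨j, Finset.mem_univ _, Finset.sum_pos' (fun i _ => sq_nonneg _)
      ⟨i, Finset.mem_univ _, by positivity⟩⟩

lemma frob_left {N : ℕ} (Q M : Matrix (Fin N) (Fin N) ℝ) (hQt : Qᵀ = Q) (hQQ : Q * Q = Q) :
    frobSq M = frobSq (Q * M) + frobSq ((1 - Q) * M) := by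
  have hqq : (1-Q)*(1-Q) = 1-Q := by
    simp [Matrix.mul_sub, Matrix.sub_mul, hQQ]
  have h1 : (Q * M)ᵀ * (Q * M) = Mᵀ * (Q * M) := by
    rw [Matrix.transpose_mul, hQt, Matrix.mul_assoc, ← Matrix.mul_assoc Q Q M, hQQ]
  have h2 : ((1-Q) * M)ᵀ * ((1-Q) * M) = Mᵀ * ((1-Q) * M) := by
    have ht : (1 - Q)ᵀ = 1 - Q := by simp [hQt]
    rw [Matrix.transpose_mul, ht, Matrix.mul_assoc, ← Matrix.mul_assoc (1-Q) (1-Q) M, hqq]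
  unfold frobSq
  rw [h1, h2, ← Matrix.trace_add, ← Matrix.mul_add, ← Matrix.add_mul]
  simp

lemma frob_right {N : ℕ} (Q M : Matrix (Fin N) (Fin N) ℝ) (hQt : Qᵀ = Q) (hQQ : Q * Q = Q) :
    frobSq M = frobSq (M * Q) + frobSq (M * (1 - Q)) := by
  have hqq : (1-Q)*(1-Q) = 1-Q := by
    simp [Matrix.mul_sub, Matrix.sub_mul, hQQ]
  have ht : (1 - Q)ᵀ = 1 - Q := by simp [hQt]
  have h1 : ((M * Q)ᵀ * (M * Q)).trace = (Mᵀ * (M * Q)).trace := by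
    rw [Matrix.transpose_mul, hQt, Matrix.mul_assoc, Matrix.trace_mul_comm,
      Matrix.mul_assoc, Matrix.mul_assoc M Q Q, hQQ]
  have h2 : ((M * (1-Q))ᵀ * (M * (1-Q))).trace = (Mᵀ * (M * (1-Q))).trace := by
    rw [Matrix.transpose_mul, ht, Matrix.mul_assoc, Matrix.trace_mul_comm,
      Matrix.mul_assoc, Matrix.mul_assoc M (1-Q) (1-Q), hqq]
  unfold frobSq
  rw [h1, h2, ← Matrix.trace_add, ← Matrix.mul_add, ← Matrix.mul_add]
  simp

end AuxStmt17

/-- `L_AEP = 𝒫L𝒫 + (I − 𝒫)L(I − 𝒫)` is the unique minimizer of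
`‖L − X‖²_F` over the feasible set. -/
theorem stmt17 {N k : ℕ} (L : Matrix (Fin N) (Fin N) ℝ)
    (hLsymm : L.IsSymm) (hLpsd : L.PosSemidef) (hL1 : L.mulVec (fun _ => 1) = 0)
    (c : Fin N → Fin k) (hc : Function.Surjective c)
    (P : Matrix (Fin N) (Fin k) ℝ)
    (hP : P = Matrix.of fun i j => if c i = j then 1 else 0)
    (Proj : Matrix (Fin N) (Fin N) ℝ) (hProj : Proj = P * (Pᵀ * P)⁻¹ * Pᵀ)
    (LAEP : Matrix (Fin N) (Fin N) ℝ)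
    (hLAEP : LAEP = Proj * L * Proj +
      ((1 : Matrix (Fin N) (Fin N) ℝ) - Proj) * L * ((1 : Matrix (Fin N) (Fin N) ℝ) - Proj)) :
    (((1 : Matrix (Fin N) (Fin N) ℝ) - Proj) * LAEP * P = 0 ∧ LAEP.IsSymm ∧
      LAEP.PosSemidef ∧ LAEP.mulVec (fun _ => 1) = 0) ∧
    ∀ X : Matrix (Fin N) (Fin N) ℝ,
      ((1 : Matrix (Fin N) (Fin N) ℝ) - Proj) * X * P = 0 → X.IsSymm → X.PosSemidef →
      X.mulVec (fun _ => 1) = 0 → X ≠ LAEP →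
      frobSq (L - LAEP) < frobSq (L - X) := by
  -- P acts as x ↦ x ∘ c
  have hPmul : ∀ x : Fin k → ℝ, P.mulVec x = fun i => x (c i) := by
    intro x; ext i
    simp [hP, Matrix.mulVec, dotProduct]
  -- PᵀP is positive definite
  have hPtP : (Pᵀ * P).PosDef := by
    refine Matrix.posDef_iff_dotProduct_mulVec.mpr ⟨Matrix.isHermitian_conjTranspose_mul_self P, fun x hx => ?_⟩
    have h1 : star x ⬝ᵥ (Pᵀ * P) *ᵥ x = (P *ᵥ x) ⬝ᵥ (P *ᵥ x) := by
      rw [star_trivial, ← Matrix.mulVec_mulVec, Matrix.dotProduct_mulVec,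
        Matrix.vecMul_transpose]
    rw [h1, hPmul]
    have : ∀ i, (fun i => x (c i)) i * (fun i => x (c i)) i = (x (c i))^2 := fun i => (sq _).symm
    obtain ⟨j, hj⟩ : ∃ j, x j ≠ 0 := Function.ne_iff.mp hx
    obtain ⟨i, rfl⟩ := hc j
    refine Finset.sum_pos' (fun i _ => mul_self_nonneg _) ⟨i, Finset.mem_univ _, ?_⟩
    exact mul_self_pos.mpr hj
  have hUnit : IsUnit (Pᵀ * P) := hPtP.isUnit
  have hInv : (Pᵀ * P)⁻¹ * (Pᵀ * P) = 1 :=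
    Matrix.nonsing_inv_mul _ ((Matrix.isUnit_iff_isUnit_det _).mp hUnit)
  have hQP : Proj * P = P := by
    rw [hProj]; simp only [Matrix.mul_assoc]; rw [hInv, Matrix.mul_one]
  have hQt : Projᵀ = Proj := by
    rw [hProj]
    rw [Matrix.transpose_mul, Matrix.transpose_mul, Matrix.transpose_transpose,
      Matrix.transpose_nonsing_inv, Matrix.transpose_mul, Matrix.transpose_transpose,
      Matrix.mul_assoc]
  have hQQ : Proj * Proj = Proj := by
    nth_rewrite 2 [hProj]
    rw [← Matrix.mul_assoc, ← Matrix.mul_assoc, hQP, ← hProj]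
  set R : Matrix (Fin N) (Fin N) ℝ := 1 - Proj with hR
  have hRt : Rᵀ = R := by simp [hR, hQt]
  have hQR : Proj * R = 0 := by simp [hR, Matrix.mul_sub, hQQ]
  have hRQ : R * Proj = 0 := by simp [hR, Matrix.sub_mul, hQQ]
  have hRR : R * R = R := by simp [hR, Matrix.mul_sub, Matrix.sub_mul, hQQ]
  have hRP : R * P = 0 := by simp [hR, Matrix.sub_mul, hQP]
  -- ones vector
  have h1N : Proj.mulVec (fun _ => 1) = (fun _ => 1) := by
    have h1k : P.mulVec (fun _ => (1:ℝ)) = fun _ => 1 := by rw [hPmul]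
    calc Proj.mulVec (fun _ => 1) = Proj.mulVec (P.mulVec fun _ => 1) := by rw [h1k]
    _ = (Proj * P).mulVec (fun _ => 1) := Matrix.mulVec_mulVec _ _ _
    _ = (fun _ => 1) := by rw [hQP, h1k]
  -- helper rewrites
  have hct : ∀ (A : Matrix (Fin N) (Fin N) ℝ), Aᴴ = Aᵀ := fun A => by
    ext i j; simp [Matrix.conjTranspose_apply]
  have hQQ0 : ∀ {m : Type} (M : Matrix (Fin N) m ℝ), Proj * (Proj * M) = Proj * M :=
    fun M => by rw [← Matrix.mul_assoc, hQQ]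
  have hRR0 : ∀ {m : Type} (M : Matrix (Fin N) m ℝ), R * (R * M) = R * M :=
    fun M => by rw [← Matrix.mul_assoc, hRR]
  have hQR0 : ∀ {m : Type} (M : Matrix (Fin N) m ℝ), Proj * (R * M) = 0 :=
    fun M => by rw [← Matrix.mul_assoc, hQR, Matrix.zero_mul]
  have hRQ0 : ∀ {m : Type} (M : Matrix (Fin N) m ℝ), R * (Proj * M) = 0 :=
    fun M => by rw [← Matrix.mul_assoc, hRQ, Matrix.zero_mul]
  have hQP0 : ∀ {m : Type} (M : Matrix (Fin k) m ℝ), Proj * (P * M) = P * M :=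
    fun M => by rw [← Matrix.mul_assoc, hQP]
  have hRP0 : ∀ {m : Type} (M : Matrix (Fin k) m ℝ), R * (P * M) = 0 :=
    fun M => by rw [← Matrix.mul_assoc, hRP, Matrix.zero_mul]
  constructor
  · refine ⟨?_, ?_, ?_, ?_⟩
    · rw [hLAEP]
      simp only [Matrix.mul_add, Matrix.add_mul, Matrix.mul_assoc]
      simp [hQP, hRP, hQQ, hRR, hQR, hRQ, hQQ0, hRR0, hQR0, hRQ0, hQP0, hRP0]
    · show LAEPᵀ = LAEP
      rw [hLAEP]
      simp only [Matrix.transpose_add, Matrix.transpose_mul, hQt, hRt, hLsymm.eq,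
        Matrix.mul_assoc]
    · rw [hLAEP]
      have p1 : (Proj * L * Proj).PosSemidef := by
        have := hLpsd.mul_mul_conjTranspose_same Proj
        rwa [hct, hQt] at this
      have p2 : (R * L * R).PosSemidef := by
        have := hLpsd.mul_mul_conjTranspose_same R
        rwa [hct, hRt] at this
      exact p1.add p2
    · have hR1 : R.mulVec (fun _ => 1) = 0 := by
        simp [hR, Matrix.sub_mulVec, h1N, Matrix.one_mulVec]
      rw [hLAEP, Matrix.add_mulVec]
      rw [← Matrix.mulVec_mulVec, ← Matrix.mulVec_mulVec, h1N, hL1, Matrix.mulVec_zero,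
        ← Matrix.mulVec_mulVec, ← Matrix.mulVec_mulVec, hR1, Matrix.mulVec_zero,
        Matrix.mulVec_zero]
      simp
  · intro X hX1 hXs hXpsd hX1v hXne
    have hXQ : R * X * Proj = 0 := by
      have h' : R * X * Proj = (R * X * P) * ((Pᵀ*P)⁻¹ * Pᵀ) := by
        rw [hProj]; simp only [Matrix.mul_assoc]
      rw [h', hX1, Matrix.zero_mul]
    have hQX : Proj * X * R = 0 := by
      have h' := congrArg Matrix.transpose hXQ
      simp only [Matrix.transpose_mul, hQt, hRt, hXs.eq, Matrix.transpose_zero] at h'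
      rw [← Matrix.mul_assoc] at h'
      exact h'
    have key : ∀ M : Matrix (Fin N) (Fin N) ℝ,
        frobSq M = frobSq (Proj*M*Proj) + frobSq (Proj*M*(1-Proj)) +
          (frobSq ((1-Proj)*M*Proj) + frobSq ((1-Proj)*M*(1-Proj))) := by
      intro M
      rw [frob_left Proj M hQt hQQ, frob_right Proj (Proj*M) hQt hQQ,
        frob_right Proj ((1-Proj)*M) hQt hQQ]
    have hfz : frobSq (0 : Matrix (Fin N) (Fin N) ℝ) = 0 := by simp [frobSq]
    -- blocks for LAEP
    have b1 : Proj*(L-LAEP)*Proj = 0 := by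
      rw [hLAEP]
      simp only [Matrix.mul_sub, Matrix.sub_mul, Matrix.mul_add, Matrix.add_mul,
        Matrix.mul_assoc]
      simp [hQQ, hRR, hQR, hRQ, hQQ0, hRR0, hQR0, hRQ0]
    have b4 : R*(L-LAEP)*R = 0 := by
      rw [hLAEP]
      simp only [Matrix.mul_sub, Matrix.sub_mul, Matrix.mul_add, Matrix.add_mul,
        Matrix.mul_assoc]
      simp [hQQ, hRR, hQR, hRQ, hQQ0, hRR0, hQR0, hRQ0]
    have b2 : Proj*(L-LAEP)*R = Proj*L*R := by
      rw [hLAEP]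
      simp only [Matrix.mul_sub, Matrix.sub_mul, Matrix.mul_add, Matrix.add_mul,
        Matrix.mul_assoc]
      simp [hQQ, hRR, hQR, hRQ, hQQ0, hRR0, hQR0, hRQ0]
    have b3 : R*(L-LAEP)*Proj = R*L*Proj := by
      rw [hLAEP]
      simp only [Matrix.mul_sub, Matrix.sub_mul, Matrix.mul_add, Matrix.add_mul,
        Matrix.mul_assoc]
      simp [hQQ, hRR, hQR, hRQ, hQQ0, hRR0, hQR0, hRQ0]
    -- blocks for X
    have c2 : Proj*(L-X)*R = Proj*L*R := by
      simp only [Matrix.mul_sub, Matrix.sub_mul]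
      rw [hQX]; simp
    have c3 : R*(L-X)*Proj = R*L*Proj := by
      simp only [Matrix.mul_sub, Matrix.sub_mul]
      rw [hXQ]; simp
    -- strictness
    have hdiag : Proj*(L-X)*Proj ≠ 0 ∨ R*(L-X)*R ≠ 0 := by
      by_contra h
      push_neg at h
      obtain ⟨h1, h2⟩ := h
      apply hXne
      have hid : X = Proj*X*Proj + Proj*X*R + R*X*Proj + R*X*R := by
        rw [hR]; noncomm_ring
      have e1 : Proj*X*Proj = Proj*L*Proj := by
        have : Proj*(L-X)*Proj = Proj*L*Proj - Proj*X*Proj := by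
          simp only [Matrix.mul_sub, Matrix.sub_mul]
        rw [this, sub_eq_zero] at h1
        rw [h1]
      have e2 : R*X*R = R*L*R := by
        have : R*(L-X)*R = R*L*R - R*X*R := by
          simp only [Matrix.mul_sub, Matrix.sub_mul]
        rw [this] at h2
        rw [sub_eq_zero] at h2
        rw [h2]
      rw [hid, hQX, hXQ, e1, e2, hLAEP]
      simp [hR]
    have hd : 0 < frobSq (Proj*(L-X)*Proj) + frobSq (R*(L-X)*R) := by
      rcases hdiag with h | h
      · exact add_pos_of_pos_of_nonneg (frobSq_pos _ h) (frobSq_nonneg _)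
      · exact add_pos_of_nonneg_of_pos (frobSq_nonneg _) (frobSq_pos _ h)
    have kL := key (L - LAEP)
    have kX := key (L - X)
    rw [← hR] at kL kX
    rw [kL, kX, b1, b2, b3, b4, c2, c3, hfz]
    linarith
end

section
/- Let L ∈ ℝ^{N×N} be symmetric positive semidefinite with L𝟙_N = 0 and with ker L = span{𝟙_N} (i.e., L is the Laplacian of a connected weighted undirected graph), let π be a partition of {1,…,N} with characteristic matrix P, and let 𝒫 = P(PᵀP)⁻¹Pᵀ. Then the matrix L_AEP = 𝒫L𝒫 + (I_N − 𝒫)L(I_N − 𝒫) satisfies ker L_AEP = span{𝟙_N}. -/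
open Matrix Filter Topology Function
open scoped Kronecker

/-- if `ker L = span{𝟙}`, then `ker L_AEP = span{𝟙}` as well. -/
theorem stmt18 {N k : ℕ} (L : Matrix (Fin N) (Fin N) ℝ)
    (hLsymm : L.IsSymm) (hLpsd : L.PosSemidef) (hL1 : L.mulVec (fun _ => 1) = 0)
    (hLker : LinearMap.ker L.mulVecLin = Submodule.span ℝ {(fun _ => 1 : Fin N → ℝ)})
    (c : Fin N → Fin k) (hc : Function.Surjective c)
    (P : Matrix (Fin N) (Fin k) ℝ)
    (hP : P = Matrix.of fun i j => if c i = j then 1 else 0)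
    (Proj : Matrix (Fin N) (Fin N) ℝ) (hProj : Proj = P * (Pᵀ * P)⁻¹ * Pᵀ)
    (LAEP : Matrix (Fin N) (Fin N) ℝ)
    (hLAEP : LAEP = Proj * L * Proj +
      ((1 : Matrix (Fin N) (Fin N) ℝ) - Proj) * L * ((1 : Matrix (Fin N) (Fin N) ℝ) - Proj)) :
    LinearMap.ker LAEP.mulVecLin = Submodule.span ℝ {(fun _ => 1 : Fin N → ℝ)} := by
  classical
  -- P applied to the all-ones vector
  have hPone : P *ᵥ (fun _ => (1:ℝ)) = fun _ => 1 := by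
    subst hP
    ext i
    simp [Matrix.mulVec, dotProduct]
  -- PᵀP is diagonal with positive entries
  set d : Fin k → ℝ := fun j => ((Finset.univ.filter fun i => c i = j).card : ℝ) with hd
  have hPtP : Pᵀ * P = Matrix.diagonal d := by
    subst hP
    ext j j'
    simp only [Matrix.mul_apply, Matrix.transpose_apply, Matrix.of_apply, Matrix.diagonal_apply]
    by_cases h : j = j'
    · subst h
      have hcongr : ∀ i : Fin N, ((if c i = j then (1:ℝ) else 0) * (if c i = j then 1 else 0))
          = if c i = j then 1 else 0 := fun i => by by_cases h : c i = j <;> simp [h]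
      rw [if_pos rfl, Finset.sum_congr rfl fun i _ => hcongr i, Finset.sum_boole, hd]
    · rw [if_neg h]
      apply Finset.sum_eq_zero
      intro i _
      by_cases h1 : c i = j <;> by_cases h2 : c i = j' <;> simp_all
  have hdpos : ∀ j, 0 < d j := by
    intro j
    obtain ⟨i, hi⟩ := hc j
    have : (Finset.univ.filter fun i => c i = j).Nonempty := ⟨i, by simp [hi]⟩
    simpa [hd] using Finset.card_pos.mpr this
  have hunit : IsUnit (Pᵀ * P).det := by
    rw [hPtP, Matrix.det_diagonal]
    exact (Finset.prod_pos fun j _ => hdpos j).ne'.isUnit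
  have hinvmul : (Pᵀ * P)⁻¹ * (Pᵀ * P) = 1 := Matrix.nonsing_inv_mul _ hunit
  have hProjP : Proj * P = P := by
    rw [hProj, Matrix.mul_assoc (P * (Pᵀ * P)⁻¹) Pᵀ P, Matrix.mul_assoc P (Pᵀ * P)⁻¹ (Pᵀ * P),
      hinvmul, Matrix.mul_one]
  have hProjT : Projᵀ = Proj := by
    rw [hProj, Matrix.transpose_mul, Matrix.transpose_mul, Matrix.transpose_transpose,
      Matrix.transpose_nonsing_inv, Matrix.transpose_mul, Matrix.transpose_transpose,
      Matrix.mul_assoc]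
  have hProj2 : Proj * Proj = Proj := by
    nth_rewrite 2 [hProj]
    rw [← Matrix.mul_assoc, ← Matrix.mul_assoc, hProjP, ← hProj]
  have hProj1 : Proj *ᵥ (fun _ => (1:ℝ)) = fun _ => 1 := by
    rw [← hPone, Matrix.mulVec_mulVec, hProjP]
  set Q : Matrix (Fin N) (Fin N) ℝ := 1 - Proj with hQ
  have hQT : Qᵀ = Q := by rw [hQ, Matrix.transpose_sub, Matrix.transpose_one, hProjT]
  have hQ2 : Q * Q = Q := by
    rw [hQ, Matrix.sub_mul, Matrix.one_mul, Matrix.mul_sub, Matrix.mul_one, hProj2, sub_self,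
      sub_zero]
  have hQ1 : Q *ᵥ (fun _ => (1:ℝ)) = 0 := by
    rw [hQ, Matrix.sub_mulVec, Matrix.one_mulVec, hProj1, sub_self]
  -- quadratic forms
  have quad : ∀ (R : Matrix (Fin N) (Fin N) ℝ), Rᵀ = R → ∀ x : Fin N → ℝ,
      x ⬝ᵥ ((R * L * R) *ᵥ x) = (R *ᵥ x) ⬝ᵥ (L *ᵥ (R *ᵥ x)) := by
    intro R hR x
    have hvR : x ᵥ* R = R *ᵥ x := by
      nth_rewrite 1 [← hR]
      exact Matrix.vecMul_transpose R x
    rw [Matrix.mul_assoc, ← Matrix.mulVec_mulVec, Matrix.dotProduct_mulVec, hvR,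
      ← Matrix.mulVec_mulVec]
  have hstar : ∀ x : Fin N → ℝ, star x = x := fun x => by
    ext i; simp
  ext x
  simp only [LinearMap.mem_ker, Matrix.mulVecLin_apply]
  constructor
  · intro hx
    have hxq : x ⬝ᵥ (LAEP *ᵥ x) = 0 := by rw [hx, dotProduct_zero]
    rw [hLAEP, Matrix.add_mulVec, dotProduct_add, quad Proj hProjT x,
      quad Q hQT x] at hxq
    set y := Proj *ᵥ x with hy
    set z := Q *ᵥ x with hz
    have h1 : 0 ≤ y ⬝ᵥ (L *ᵥ y) := by simpa [hstar] using hLpsd.dotProduct_mulVec_nonneg y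
    have h2 : 0 ≤ z ⬝ᵥ (L *ᵥ z) := by simpa [hstar] using hLpsd.dotProduct_mulVec_nonneg z
    have hy0 : L *ᵥ y = 0 := by
      rw [← hLpsd.dotProduct_mulVec_zero_iff y, hstar]; linarith
    have hz0 : L *ᵥ z = 0 := by
      rw [← hLpsd.dotProduct_mulVec_zero_iff z, hstar]; linarith
    have hyk : y ∈ Submodule.span ℝ {(fun _ => 1 : Fin N → ℝ)} := by
      rw [← hLker]; simpa [Matrix.mulVecLin_apply] using hy0
    have hzk : z ∈ Submodule.span ℝ {(fun _ => 1 : Fin N → ℝ)} := by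
      rw [← hLker]; simpa [Matrix.mulVecLin_apply] using hz0
    obtain ⟨b, hb⟩ := Submodule.mem_span_singleton.mp hzk
    have hz00 : z = 0 := by
      have : Q *ᵥ z = z := by rw [hz, Matrix.mulVec_mulVec, hQ2]
      rw [← this, ← hb, Matrix.mulVec_smul, hQ1, smul_zero]
    have hxy : x = y := by
      have : y + z = x := by
        rw [hy, hz, ← Matrix.add_mulVec, hQ]
        simp [Matrix.one_mulVec]
      rw [← this, hz00, add_zero]
    rw [hxy]; exact hyk
  · intro hx
    obtain ⟨a, ha⟩ := Submodule.mem_span_singleton.mp hx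
    have h1 : LAEP *ᵥ (fun _ => (1:ℝ)) = 0 := by
      rw [hLAEP, Matrix.add_mulVec, Matrix.mul_assoc, Matrix.mul_assoc,
        ← Matrix.mulVec_mulVec, ← Matrix.mulVec_mulVec, ← Matrix.mulVec_mulVec,
        ← Matrix.mulVec_mulVec, hProj1, hQ1, Matrix.mulVec_zero, Matrix.mulVec_zero, hL1,
        Matrix.mulVec_zero, add_zero]
    rw [← ha, Matrix.mulVec_smul, h1, smul_zero]
end

section
/- Let L ∈ ℝ^{N×N} be symmetric positive semidefinite with L𝟙_N = 0, let π be a partition of {1,…,N} with characteristic matrix P ∈ ℝ^{N×k}, let M ∈ ℝ^{N×m} have columns e_{v₁},…,e_{v_m} for distinct nodes v₁,…,v_m, and set 𝒫 = P(PᵀP)⁻¹Pᵀ, L̂ = (PᵀP)⁻¹PᵀLP, M̂ = (PᵀP)⁻¹PᵀM, L_AEP = 𝒫L𝒫 + (I_N − 𝒫)L(I_N − 𝒫), and ΔL = L − L_AEP. Then: (i) L̂_AEP := (PᵀP)⁻¹PᵀL_AEP P = L̂ and L_AEP P = PL̂; (ii) the reduced transfer functions Ŝ(s) = LP(sI + L̂)⁻¹M̂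 and Ŝ_AEP(s) = L_AEP P(sI + L̂)⁻¹M̂ satisfy Ŝ(s) − Ŝ_AEP(s) = (LP − PL̂)(sI + L̂)⁻¹M̂, (LP − PL̂)ᵀ(LP − PL̂) = Pᵀ(ΔL)²P, and hence σ_max(Ŝ(iω) − Ŝ_AEP(iω)) ≤ σ_max(ΔL·P(iωI + L̂)⁻¹M̂) for every ω ∈ ℝ for which iωI + L̂ is invertible. -/
open Matrix Filter Topology Function
open scoped Kronecker

lemma cplx_sub {a b : Type*} (A B : Matrix a b ℝ) : cplx (A - B) = cplx A - cplx B := by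
  ext i j; simp [cplx]

lemma cplx_mul {a b c : Type*} [Fintype b] (A : Matrix a b ℝ) (B : Matrix b c ℝ) :
    cplx (A * B) = cplx A * cplx B := by
  ext i j; simp [cplx, Matrix.mul_apply]

/-- properties of the approximating Laplacian `L_AEP` and of the difference
of the reduced transfer functions. -/
theorem stmt19 {N k m : ℕ} (L : Matrix (Fin N) (Fin N) ℝ)
    (hLsymm : L.IsSymm) (hLpsd : L.PosSemidef) (hL1 : L.mulVec (fun _ => 1) = 0)
    (c : Fin N → Fin k) (hc : Function.Surjective c)
    (P : Matrix (Fin N) (Fin k) ℝ)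
    (hP : P = Matrix.of fun i j => if c i = j then 1 else 0)
    (v : Fin m → Fin N) (hv : Function.Injective v)
    (M : Matrix (Fin N) (Fin m) ℝ)
    (hM : M = Matrix.of fun i j => if i = v j then 1 else 0)
    (Proj : Matrix (Fin N) (Fin N) ℝ) (hProj : Proj = P * (Pᵀ * P)⁻¹ * Pᵀ)
    (Lhat : Matrix (Fin k) (Fin k) ℝ) (hLhat : Lhat = (Pᵀ * P)⁻¹ * (Pᵀ * L * P))
    (Mhat : Matrix (Fin k) (Fin m) ℝ) (hMhat : Mhat = (Pᵀ * P)⁻¹ * (Pᵀ * M))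
    (LAEP : Matrix (Fin N) (Fin N) ℝ)
    (hLAEP : LAEP = Proj * L * Proj +
      ((1 : Matrix (Fin N) (Fin N) ℝ) - Proj) * L * ((1 : Matrix (Fin N) (Fin N) ℝ) - Proj))
    (DL : Matrix (Fin N) (Fin N) ℝ) (hDL : DL = L - LAEP) :
    (Pᵀ * P)⁻¹ * (Pᵀ * LAEP * P) = Lhat ∧
    LAEP * P = P * Lhat ∧
    (∀ s : ℂ, singleShat L P Lhat Mhat s - singleShat LAEP P Lhat Mhat s =
      cplx (L * P - P * Lhat) *
        (s • (1 : Matrix (Fin k) (Fin k) ℂ) + cplx Lhat)⁻¹ * cplx Mhat) ∧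
    (L * P - P * Lhat)ᵀ * (L * P - P * Lhat) = Pᵀ * (DL * DL) * P ∧
    (∀ ω : ℝ,
      IsUnit (((ω : ℂ) * Complex.I) • (1 : Matrix (Fin k) (Fin k) ℂ) + cplx Lhat) →
      sigmaMax (singleShat L P Lhat Mhat ((ω : ℂ) * Complex.I) -
          singleShat LAEP P Lhat Mhat ((ω : ℂ) * Complex.I)) ≤
        sigmaMax (cplx DL * cplx P *
          (((ω : ℂ) * Complex.I) • (1 : Matrix (Fin k) (Fin k) ℂ) + cplx Lhat)⁻¹ *
          cplx Mhat)) := by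
  classical
  have hPtP : Pᵀ * P =
      Matrix.diagonal (fun j : Fin k => ((Finset.univ.filter fun i => c i = j).card : ℝ)) := by
    ext a b
    simp only [Matrix.mul_apply, Matrix.transpose_apply, hP, Matrix.of_apply,
      Matrix.diagonal_apply]
    by_cases hab : a = b
    · subst hab
      simp only [if_pos rfl]
      rw [Finset.card_filter]
      push_cast
      apply Finset.sum_congr rfl
      intro i _
      by_cases h : c i = a <;> simp [h]
    · rw [if_neg hab]
      apply Finset.sum_eq_zero
      intro i _
      by_cases h : c i = a
      · have hb : ¬ c i = b := by rw [h]; exact hab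
        simp [h, hb, hab]
      · simp [h]
  have hdet : IsUnit (Pᵀ * P).det := by
    rw [hPtP, Matrix.det_diagonal]
    refine (Finset.prod_ne_zero_iff.2 fun j _ => ?_).isUnit
    have hne : (Finset.univ.filter fun i => c i = j).Nonempty := by
      obtain ⟨i, hi⟩ := hc j
      exact ⟨i, by simp [hi]⟩
    exact_mod_cast Finset.card_ne_zero_of_mem hne.choose_spec
  have hinv : (Pᵀ * P)⁻¹ * (Pᵀ * P) = 1 := Matrix.nonsing_inv_mul _ hdet
  have hinvT : ((Pᵀ * P)⁻¹)ᵀ = (Pᵀ * P)⁻¹ := by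
    rw [Matrix.transpose_nonsing_inv, Matrix.transpose_mul, Matrix.transpose_transpose]
  have hProjSymm : Projᵀ = Proj := by
    rw [hProj, Matrix.transpose_mul, Matrix.transpose_mul, Matrix.transpose_transpose, hinvT,
      Matrix.mul_assoc]
  have hProjP : Proj * P = P := by
    rw [hProj, Matrix.mul_assoc (P * (Pᵀ * P)⁻¹) Pᵀ P, Matrix.mul_assoc P (Pᵀ * P)⁻¹ (Pᵀ * P),
      hinv, Matrix.mul_one]
  have h2 : LAEP * P = P * Lhat := by
    have hIP : ((1 : Matrix (Fin N) (Fin N) ℝ) - Proj) * P = 0 := by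
      rw [Matrix.sub_mul, Matrix.one_mul, hProjP, sub_self]
    rw [hLAEP, Matrix.add_mul, Matrix.mul_assoc _ _ P, Matrix.mul_assoc _ _ P, hIP,
      Matrix.mul_zero, add_zero, hProjP, hProj, hLhat]
    simp only [Matrix.mul_assoc]
  have h1 : (Pᵀ * P)⁻¹ * (Pᵀ * LAEP * P) = Lhat := by
    rw [Matrix.mul_assoc Pᵀ LAEP P, h2, ← Matrix.mul_assoc Pᵀ P Lhat,
      ← Matrix.mul_assoc, hinv, Matrix.one_mul]
  have hDLP : DL * P = L * P - P * Lhat := by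
    rw [hDL, Matrix.sub_mul, h2]
  have hDLsymm : DLᵀ = DL := by
    rw [hDL, hLAEP, Matrix.transpose_sub, hLsymm.eq, Matrix.transpose_add,
      Matrix.transpose_mul, Matrix.transpose_mul, Matrix.transpose_mul, Matrix.transpose_mul,
      Matrix.transpose_sub, Matrix.transpose_one, hProjSymm, hLsymm.eq]
    simp only [Matrix.mul_assoc]
  have h3 : ∀ s : ℂ, singleShat L P Lhat Mhat s - singleShat LAEP P Lhat Mhat s =
      cplx (L * P - P * Lhat) *
        (s • (1 : Matrix (Fin k) (Fin k) ℂ) + cplx Lhat)⁻¹ * cplx Mhat := by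
    intro s
    rw [singleShat, singleShat, cplx_sub, ← h2, Matrix.sub_mul, Matrix.sub_mul]
  refine ⟨h1, h2, h3, ?_, ?_⟩
  · rw [← hDLP, Matrix.transpose_mul, hDLsymm]
    simp only [Matrix.mul_assoc]
  · intro ω _
    rw [h3, ← hDLP, cplx_mul]
end
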